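/- arXiv:2006.12851 — 12 statements merged into one kernel-verified Lean document; each statement's English description precedes it below -/
import Mathlib

section
/- Let a, b, m > 0 and let c be a real number with c < 2√a. Then there exist no twice continuously differentiable functions U, V : ℝ → ℝ with U(z) ≥ 0 and V(z) ≥ 0 for all z ∈ ℝ, solving the travelling-wave system (γ(V)U)'' + cU' + U(a − bU) = 0 and V'' + cV' + U − V = 0 on ℝ, and satisfying lim_{z→−∞} U(z) = lim_{z→−∞} V(z) = a/b and lim_{z→+∞} U(z) = lim_{z→+∞} V(z) = 0. -/
open Real Filter Set

lemma mono_of_derivGE {f f' : ℝ → ℝ} {Z x y : ℝ}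
    (hf : ∀ z, Z ≤ z → HasDerivAt f (f' z) z) (h0 : ∀ z, Z ≤ z → 0 ≤ f' z)
    (hx : Z ≤ x) (hxy : x ≤ y) : f x ≤ f y := by
  have hmono : MonotoneOn f (Set.Ici Z) := by
    apply monotoneOn_of_deriv_nonneg (convex_Ici Z)
    · exact fun z hz => (hf z hz).continuousAt.continuousWithinAt
    · intro z hz
      rw [interior_Ici] at hz
      exact ((hf z (le_of_lt hz)).differentiableAt).differentiableWithinAt
    · intro z hz
      rw [interior_Ici] at hz
      rw [(hf z (le_of_lt hz)).deriv]
      exact h0 z (le_of_lt hz)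
  exact hmono hx (le_trans hx hxy) hxy

lemma anti_of_derivLE {f f' : ℝ → ℝ} {Z x y : ℝ}
    (hf : ∀ z, Z ≤ z → HasDerivAt f (f' z) z) (h0 : ∀ z, Z ≤ z → f' z ≤ 0)
    (hx : Z ≤ x) (hxy : x ≤ y) : f y ≤ f x := by
  have := mono_of_derivGE (f := fun z => -f z) (f' := fun z => -f' z)
    (fun z hz => (hf z hz).neg) (fun z hz => by simpa using h0 z hz) hx hxy
  simpa using this

lemma abs_sub_le_of_derivBound {f f' : ℝ → ℝ} {x y C : ℝ} (hxy : x ≤ y)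
    (hf : ∀ z ∈ Set.Icc x y, HasDerivAt f (f' z) z)
    (hC : ∀ z ∈ Set.Icc x y, |f' z| ≤ C) : |f y - f x| ≤ C * (y - x) := by
  have := norm_image_sub_le_of_norm_deriv_le_segment'
    (f := f) (f' := f') (a := x) (b := y)
    (fun z hz => (hf z hz).hasDerivWithinAt)
    (fun z hz => by rw [Real.norm_eq_abs]; exact hC z (Set.mem_Icc_of_Ico hz))
    y (Set.right_mem_Icc.mpr hxy)
  simpa [Real.norm_eq_abs] using this

lemma no_pos_deriv_limit {f f' : ℝ → ℝ} {A ε : ℝ} (hf : ∀ x, HasDerivAt f (f' x) x)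
    (hA : Tendsto f atTop (nhds A)) (hε : 0 < ε)
    (h : ∀ᶠ x in atTop, ε ≤ f' x) : False := by
  obtain ⟨Z, hZ⟩ := eventually_atTop.mp h
  obtain ⟨Z', hZ'⟩ := eventually_atTop.mp (hA.eventually (eventually_le_nhds (lt_add_one A)))
  set z := (max Z Z') + (max 0 ((A + 1 - f Z) / ε)) + 1 with hz
  clear_value z
  have hzZ : Z ≤ z := by
    have := le_max_left Z Z'
    have := le_max_left (0:ℝ) ((A + 1 - f Z) / ε)
    linarith
  have hzZ' : Z' ≤ z := by
    have := le_max_right Z Z'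
    have := le_max_left (0:ℝ) ((A + 1 - f Z) / ε)
    linarith
  -- monotonicity of f x - ε x
  have hkey : f Z - ε * Z ≤ f z - ε * z := by
    apply mono_of_derivGE (f := fun x => f x - ε * x) (f' := fun x => f' x - ε)
      (fun x hx => (hf x).sub (((hasDerivAt_id x).const_mul ε).congr_deriv (by ring)))
      (fun x hx => by have := hZ x hx; linarith) le_rfl hzZ
  have h1 : f z ≤ A + 1 := hZ' z hzZ'
  have h2 : (A + 1 - f Z) / ε ≤ max 0 ((A + 1 - f Z) / ε) := le_max_right _ _
  have h3 : ε * ((A + 1 - f Z) / ε) = A + 1 - f Z := mul_div_cancel₀ _ (ne_of_gt hε)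
  have h4 : z - Z ≥ (A + 1 - f Z) / ε + 1 := by
    have := le_max_left Z Z'
    linarith
  nlinarith [mul_le_mul_of_nonneg_left h4 (le_of_lt hε)]

lemma deriv_limit_zero {f f' : ℝ → ℝ} {A L : ℝ} (hf : ∀ x, HasDerivAt f (f' x) x)
    (hA : Tendsto f atTop (nhds A)) (hL : Tendsto f' atTop (nhds L)) : L = 0 := by
  by_contra hL0
  rcases lt_or_gt_of_ne hL0 with hneg | hpos
  · exact no_pos_deriv_limit (f := fun x => -f x) (f' := fun x => -f' x)
      (fun x => (hf x).neg) hA.neg (by linarith : (0:ℝ) < -L/2)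
      (hL.eventually (eventually_le_nhds (by linarith : L < -(-L/2))) |>.mono
        (fun x hx => by linarith))
  · exact no_pos_deriv_limit hf hA (by linarith : (0:ℝ) < L/2)
      (hL.eventually (eventually_ge_nhds (by linarith : L/2 < L)) |>.mono
        (fun x hx => by linarith))


set_option maxHeartbeats 4000000 in
/-- no nonnegative travelling wave connecting `(a/b, a/b)` to
`(0,0)` exists when the wave speed satisfies `c < 2√a`. -/
theorem no_travelling_wave_subcritical_speed
    (a b m c : ℝ) (ha : 0 < a) (hb : 0 < b) (hm : 0 < m)
    (hc : c < 2 * Real.sqrt a) :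
    ¬ ∃ U V : ℝ → ℝ, ContDiff ℝ 2 U ∧ ContDiff ℝ 2 V ∧
      (∀ z, 0 ≤ U z) ∧ (∀ z, 0 ≤ V z) ∧
      (∀ z, deriv (deriv (fun y => (1 + V y) ^ (-m) * U y)) z
          + c * deriv U z + U z * (a - b * U z) = 0) ∧
      (∀ z, deriv (deriv V) z + c * deriv V z + U z - V z = 0) ∧
      Tendsto U atBot (nhds (a / b)) ∧ Tendsto V atBot (nhds (a / b)) ∧
      Tendsto U atTop (nhds 0) ∧ Tendsto V atTop (nhds 0) := by
  rintro ⟨U, V, hU2, hV2, hU0, hV0, hEqU, hEqV, hUbot, hVbot, hUtop, hVtop⟩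
  -- basic differentiability extraction
  have hcd : ∀ (f : ℝ → ℝ), ContDiff ℝ 2 f →
      Differentiable ℝ f ∧ Differentiable ℝ (deriv f) := by
    intro f hf
    rw [show ((2:WithTop ℕ∞)) = 1 + 1 by norm_num] at hf
    obtain ⟨h1, -, h2⟩ := contDiff_succ_iff_deriv.mp hf
    exact ⟨h1, h2.differentiable one_ne_zero⟩
  obtain ⟨hUdiff, hU'diff⟩ := hcd U hU2
  obtain ⟨hVdiff, hV'diff⟩ := hcd V hV2
  have h1V : ∀ z, (0:ℝ) < 1 + V z := fun z => by linarith [hV0 z]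
  set W : ℝ → ℝ := fun y => (1 + V y) ^ (-m) * U y with hWdef
  have hW2 : ContDiff ℝ 2 W := by
    apply ContDiff.mul _ hU2
    rw [contDiff_iff_contDiffAt]
    intro x
    exact ((contDiff_const.add hV2).contDiffAt).rpow_const_of_ne (ne_of_gt (h1V x))
  obtain ⟨hWdiff, hW'diff⟩ := hcd W hW2
  set h : ℝ → ℝ := fun z => (1 + V z) ^ m with hhdef
  have hUW : ∀ z, U z = h z * W z := by
    intro z
    simp only [hhdef, hWdef]
    rw [← mul_assoc, ← Real.rpow_add (h1V z)]
    simp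
  have hh1 : ∀ z, (1:ℝ) ≤ h z := by
    intro z
    calc (1:ℝ) = 1 ^ m := (Real.one_rpow m).symm
      _ ≤ (1 + V z) ^ m := Real.rpow_le_rpow (by norm_num) (by linarith [hV0 z]) hm.le
  have hW0 : ∀ z, 0 ≤ W z :=
    fun z => mul_nonneg (Real.rpow_pos_of_pos (h1V z) _).le (hU0 z)
  have hWU : ∀ z, W z ≤ U z := by
    intro z
    have h1 : (1 + V z) ^ (-m) ≤ 1 :=
      Real.rpow_le_one_of_one_le_of_nonpos (by linarith [hV0 z]) (by linarith)
    calc (1 + V z) ^ (-m) * U z ≤ 1 * U z :=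
          mul_le_mul_of_nonneg_right h1 (hU0 z)
      _ = U z := one_mul _
  have hWtop : Tendsto W atTop (nhds 0) := squeeze_zero hW0 hWU hUtop
  set T : ℝ → ℝ := fun z => deriv W z + c * U z with hTdef
  have hTd : ∀ z, HasDerivAt T (-(U z * (a - b * U z))) z := by
    intro z
    have h1 : HasDerivAt (deriv W) (deriv (deriv W) z) z := (hW'diff z).hasDerivAt
    have h2 : HasDerivAt (fun y => c * U y) (c * deriv U z) z :=
      (hUdiff z).hasDerivAt.const_mul c
    exact (h1.add h2).congr_deriv (by linarith [hEqU z])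
  -- the tail where b U ≤ a/2
  obtain ⟨Z₀, hZ₀⟩ : ∃ Z₀, ∀ z ≥ Z₀, U z < a / (2*b) :=
    eventually_atTop.mp (hUtop.eventually (eventually_lt_nhds (by positivity)))
  have hf0 : ∀ z, Z₀ ≤ z → 0 ≤ U z * (a - b * U z) := by
    intro z hz
    have := hZ₀ z hz
    have h2 : U z * (2*b) < a := (lt_div_iff₀ (by positivity)).mp this
    nlinarith [hU0 z]
  have hTanti : ∀ x y, Z₀ ≤ x → x ≤ y → T y ≤ T x := by
    intro x y hx hxy
    exact anti_of_derivLE (f' := fun z => -(U z * (a - b * U z))) (fun z _ => hTd z)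
      (fun z hz => by linarith [hf0 z hz]) hx hxy
  -- T has a limit L at +∞, and L = 0
  have hTlim : Tendsto T atTop (nhds 0) := by
    have hWd : ∀ z, HasDerivAt W (deriv W z) z := fun z => (hWdiff z).hasDerivAt
    have hlim : ∃ L, Tendsto T atTop (nhds L) := by
      by_cases hbdd : BddBelow (T '' Set.Ici Z₀)
      · refine ⟨sInf (T '' Set.Ici Z₀), ?_⟩
        rw [Metric.tendsto_atTop]
        intro ε hε
        have hne : (T '' Set.Ici Z₀).Nonempty := ⟨T Z₀, mem_image_of_mem T self_mem_Ici⟩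
        obtain ⟨t, ht, htlt⟩ := (csInf_lt_iff hbdd hne).mp (lt_add_of_pos_right _ hε)
        obtain ⟨y, hy, rfl⟩ := ht
        refine ⟨y, fun z hz => ?_⟩
        have h1 : sInf (T '' Set.Ici Z₀) ≤ T z :=
          csInf_le hbdd (mem_image_of_mem T (le_trans hy hz))
        have h2 : T z ≤ T y := hTanti y z hy hz
        rw [Real.dist_eq, abs_lt]
        constructor <;> linarith
      · exfalso
        obtain ⟨Z₁', hZ₁'⟩ : ∃ N, ∀ z ≥ N, |c| * U z ≤ 1 := by
          have h1 : Tendsto (fun z => |c| * U z) atTop (nhds 0) := by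
            simpa using hUtop.const_mul |c|
          exact eventually_atTop.mp (h1.eventually (eventually_le_nhds one_pos))
        obtain ⟨t, ht, htlt⟩ := not_bddBelow_iff.mp hbdd (-2)
        obtain ⟨y, hy, rfl⟩ := ht
        set z₁ := max y Z₁' with hz₁
        clear_value z₁
        have hkey : ∀ z, z₁ ≤ z → deriv W z + 1 ≤ 0 := by
          intro z hz
          have h1 : T z ≤ T y := hTanti y z hy (le_trans (le_max_left _ _) (le_of_eq hz₁.symm) |>.trans hz)
          have h2 : |c| * U z ≤ 1 := hZ₁' z ((le_max_right y Z₁').trans ((le_of_eq hz₁.symm).trans hz))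
          have h3 : -c * U z ≤ |c| * U z :=
            mul_le_mul_of_nonneg_right (by simpa using le_abs_self (-c)) (hU0 z)
          have h4 : deriv W z = T z - c * U z := by simp [hTdef]
          linarith
        have hanti : ∀ z, z₁ ≤ z → W z + z ≤ W z₁ + z₁ := by
          intro z hz
          exact anti_of_derivLE (f := fun t => W t + t) (f' := fun t => deriv W t + 1)
            (fun t _ => (hWd t).add (hasDerivAt_id t))
            (fun t ht => hkey t ht) le_rfl hz
        have h5 := hanti (z₁ + W z₁ + 1) (by linarith [hW0 z₁])
        linarith [hW0 (z₁ + W z₁ + 1)]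
    obtain ⟨L, hL⟩ := hlim
    have hdWlim : Tendsto (fun z => deriv W z) atTop (nhds L) := by
      have h1 : Tendsto (fun z => T z - c * U z) atTop (nhds (L - c * 0)) :=
        hL.sub (hUtop.const_mul c)
      simp only [mul_zero, sub_zero] at h1
      exact h1.congr (fun z => by simp [hTdef])
    have hL0 : L = 0 := deriv_limit_zero (f := W) (f' := fun z => deriv W z) hWd hWtop hdWlim
    rwa [hL0] at hL
  have hTnonneg : ∀ z, Z₀ ≤ z → 0 ≤ T z := by
    intro z hz
    exact le_of_tendsto hTlim (eventually_atTop.mpr ⟨z, fun y hy => hTanti z y hz hy⟩)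
  -- main case split
  by_cases hcase : ∃ z₀, Z₀ ≤ z₀ ∧ U z₀ = 0
  · obtain ⟨z₀, hz₀Z, hUz₀⟩ := hcase
    have hWz₀ : W z₀ = 0 := by simp [hWdef, hUz₀]
    have hdWz₀ : deriv W z₀ = 0 := by
      have hmin : IsLocalMin W z₀ :=
        Filter.Eventually.of_forall (fun y => by rw [hWz₀]; exact hW0 y)
      exact hmin.deriv_eq_zero
    have hTz₀ : T z₀ = 0 := by simp [hTdef, hdWz₀, hUz₀]
    have hT0on : ∀ z, z₀ ≤ z → T z = 0 := fun z hz =>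
      le_antisymm (hTz₀ ▸ hTanti z₀ z hz₀Z hz) (hTnonneg z (le_trans hz₀Z hz))
    have hU0on : ∀ z, z₀ ≤ z → U z = 0 := by
      intro z hz
      rcases eq_or_lt_of_le hz with rfl | hlt
      · exact hUz₀
      · have hev : (fun _ => (0:ℝ)) =ᶠ[nhds z] T :=
          Filter.eventuallyEq_of_mem (Ioi_mem_nhds hlt)
            (fun y hy => (hT0on y (le_of_lt hy)).symm)
        have h1 : HasDerivAt (fun _ => (0:ℝ)) (-(U z * (a - b * U z))) z :=
          (hTd z).congr_of_eventuallyEq hev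
        have h2 : -(U z * (a - b * U z)) = 0 := h1.unique (hasDerivAt_const z 0)
        have h3 : U z * (2*b) < a :=
          (lt_div_iff₀ (by positivity)).mp (hZ₀ z (le_trans hz₀Z hz))
        rcases mul_eq_zero.mp (by linarith : U z * (a - b * U z) = 0) with h' | h'
        · exact h'
        · nlinarith [hU0 z]
    set S : Set ℝ := {s : ℝ | ∀ z, s ≤ z → U z = 0} with hSdef
    have hz₀S : z₀ ∈ S := hU0on
    obtain ⟨w, hw⟩ : ∃ w, 0 < U w := by
      have hab : a/(2*b) < a/b := by
        rw [div_lt_div_iff₀ (by positivity) (by positivity)]; nlinarith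
      obtain ⟨w, hw⟩ := (hUbot.eventually (eventually_gt_nhds hab)).exists
      exact ⟨w, lt_trans (by positivity) hw⟩
    have hSbdd : BddBelow S := ⟨w, fun s hs => by
      by_contra hws
      push_neg at hws
      exact absurd (hs w (le_of_lt hws)) (ne_of_gt hw)⟩
    have hSne : S.Nonempty := ⟨z₀, hz₀S⟩
    set s₁ := sInf S with hs₁def
    have hstrict : ∀ z, s₁ < z → U z = 0 := by
      intro z hz
      obtain ⟨s, hsS, hsy⟩ := (csInf_lt_iff hSbdd hSne).mp hz
      exact hsS z (le_of_lt hsy)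
    have hUs₁ : U s₁ = 0 := by
      have h1 : Tendsto U (nhdsWithin s₁ (Ioi s₁)) (nhds (U s₁)) :=
        (hUdiff s₁).continuousAt.continuousWithinAt
      have h2 : Tendsto U (nhdsWithin s₁ (Ioi s₁)) (nhds 0) := by
        apply Tendsto.congr' _ tendsto_const_nhds
        filter_upwards [self_mem_nhdsWithin] with y hy
        exact (hstrict y hy).symm
      exact tendsto_nhds_unique h1 h2
    have hs₁S : s₁ ∈ S := by
      intro z hz
      rcases eq_or_lt_of_le hz with rfl | hlt
      · exact hUs₁
      · exact hstrict z hlt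
    have hWs₁ : W s₁ = 0 := by simp [hWdef, hUs₁]
    have hdWs₁ : deriv W s₁ = 0 := by
      have hmin : IsLocalMin W s₁ :=
        Filter.Eventually.of_forall (fun y => by rw [hWs₁]; exact hW0 y)
      exact hmin.deriv_eq_zero
    have hTs₁ : T s₁ = 0 := by simp [hTdef, hdWs₁, hUs₁]
    -- compact bounds on [s₁-1, s₁]
    have hs₁1 : s₁ - 1 ≤ s₁ := by linarith
    obtain ⟨tB, htBmem, htBmax⟩ := isCompact_Icc.exists_isMaxOn (f := U)
      (Set.nonempty_Icc.mpr hs₁1) (hUdiff.continuous.continuousOn)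
    set B := U tB with hBdef
    have hB0 : 0 ≤ B := hU0 tB
    have htBmax' : ∀ t ∈ Icc (s₁ - 1) s₁, U t ≤ B := fun t ht => htBmax ht
    clear_value B
    have hhcont : Continuous h :=
      (continuous_const.add hVdiff.continuous).rpow_const (fun x => Or.inr hm.le)
    obtain ⟨tH, htHmem, htHmax⟩ := isCompact_Icc.exists_isMaxOn (f := h)
      (Set.nonempty_Icc.mpr hs₁1) hhcont.continuousOn
    set H := h tH with hHdef
    have hH1 : (1:ℝ) ≤ H := le_trans (hh1 s₁) (htHmax (right_mem_Icc.mpr hs₁1))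
    have htHmax' : ∀ t ∈ Icc (s₁ - 1) s₁, h t ≤ H := fun t ht => htHmax ht
    clear_value H
    have hH0 : 0 < H := lt_of_lt_of_le one_pos hH1
    set C := a + b * B with hCdef
    have hC0 : 0 < C := by have := mul_nonneg hb.le hB0; linarith
    clear_value C
    have hden : 0 < 2*H*(|c| + C) :=
      mul_pos (by linarith) (by linarith [abs_nonneg c])
    set d := min 1 (1/(2*H*(|c| + C))) with hddef
    have hd0 : 0 < d := lt_min one_pos (one_div_pos.mpr hden)
    have hd1 : d ≤ 1 := min_le_left _ _
    have hd2' : d ≤ 1/(2*H*(|c| + C)) := min_le_right _ _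
    clear_value d
    have hkeyd : H * d * (|c| + C * d) ≤ 1/2 := by
      have h1 : d * (2*H*(|c| + C)) ≤ 1 := by
        rw [le_div_iff₀ hden] at hd2'; linarith
      have h2 : C * d ≤ C * 1 := mul_le_mul_of_nonneg_left hd1 hC0.le
      rw [mul_one] at h2
      have h3 : H * d * (|c| + C*d) ≤ H * d * (|c| + C) :=
        mul_le_mul_of_nonneg_left (by linarith) (mul_nonneg (by linarith) hd0.le)
      linarith
    -- the max of U on [s₁ - d, s₁]
    have hsd : s₁ - d ≤ s₁ := by linarith
    obtain ⟨t₁, ht₁mem, ht₁max⟩ := isCompact_Icc.exists_isMaxOn (f := U)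
      (Set.nonempty_Icc.mpr hsd) (hUdiff.continuous.continuousOn)
    set M := U t₁ with hMdef
    have hM0 : 0 ≤ M := hU0 t₁
    have ht₁max' : ∀ t ∈ Icc (s₁ - d) s₁, U t ≤ M := fun t ht => ht₁max ht
    have hUt₁M : U t₁ = M := hMdef.symm
    clear_value M
    have hsub : Icc (s₁ - d) s₁ ⊆ Icc (s₁ - 1) s₁ := Icc_subset_Icc (by linarith) le_rfl
    have hMB : ∀ t ∈ Icc (s₁-d) s₁, U t ≤ M := ht₁max'
    have hUB : ∀ t ∈ Icc (s₁-d) s₁, U t ≤ B := fun t ht => htBmax' t (hsub ht)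
    have hhH : ∀ t ∈ Icc (s₁-d) s₁, h t ≤ H := fun t ht => htHmax' t (hsub ht)
    -- |T| ≤ C M d on the interval
    have hTt : ∀ t ∈ Icc (s₁-d) s₁, |T t| ≤ C*M*d := by
      intro t ht
      rw [mem_Icc] at ht
      have hbound : ∀ τ ∈ Icc t s₁, |(fun z => -(U z * (a - b * U z))) τ| ≤ C*M := by
        intro τ hτ
        rw [mem_Icc] at hτ
        have hτ' : τ ∈ Icc (s₁-d) s₁ := mem_Icc.mpr ⟨le_trans ht.1 hτ.1, hτ.2⟩
        have e0 : |(fun z => -(U z * (a - b * U z))) τ| = U τ * |a - b*U τ| := by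
          dsimp only
          rw [abs_neg, abs_mul, abs_of_nonneg (hU0 τ)]
        rw [e0]
        have e1 : |a - b*U τ| ≤ C := by
          rw [abs_le, hCdef]
          have h6 := mul_le_mul_of_nonneg_left (hUB τ hτ') hb.le
          have h7 := mul_nonneg hb.le (hU0 τ)
          have h8 := mul_nonneg hb.le hB0
          constructor <;> linarith
        calc U τ * |a - b*U τ| ≤ M * C :=
              mul_le_mul (hMB τ hτ') e1 (abs_nonneg _) hM0
          _ = C * M := mul_comm _ _
      have h1 := abs_sub_le_of_derivBound (f := T)
        (f' := fun z => -(U z * (a - b * U z))) ht.2 (fun τ _ => hTd τ) hbound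
      rw [hTs₁] at h1
      have h2 : |T t| = |0 - T t| := by rw [zero_sub, abs_neg]
      rw [h2]
      calc |0 - T t| ≤ C*M*(s₁ - t) := h1
        _ ≤ C*M*d := by
            apply mul_le_mul_of_nonneg_left (by linarith [ht.1]) (mul_nonneg hC0.le hM0)
    -- |W'| bound and then W bound
    have hdWt : ∀ t ∈ Icc (s₁-d) s₁, |deriv W t| ≤ |c| * M + C*M*d := by
      intro t ht
      have e1 : deriv W t = T t - c * U t := by
        show deriv W t = (deriv W t + c * U t) - c * U t; ring
      rw [e1]
      have e2 : |c * U t| ≤ |c| * M := by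
        rw [abs_mul, abs_of_nonneg (hU0 t)]
        exact mul_le_mul_of_nonneg_left (hMB t ht) (abs_nonneg c)
      have e3 := hTt t ht
      calc |T t - c * U t| ≤ |T t| + |c * U t| := abs_sub _ _
        _ ≤ |c| * M + C*M*d := by linarith
    have hWt : ∀ t ∈ Icc (s₁-d) s₁, W t ≤ (|c| * M + C*M*d)*d := by
      intro t ht
      rw [mem_Icc] at ht
      have hbound : ∀ τ ∈ Icc t s₁, |deriv W τ| ≤ |c| * M + C*M*d := by
        intro τ hτ
        rw [mem_Icc] at hτ
        exact hdWt τ (mem_Icc.mpr ⟨le_trans ht.1 hτ.1, hτ.2⟩)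
      have h1 := abs_sub_le_of_derivBound (f := W) (f' := fun z => deriv W z)
        ht.2 (fun τ _ => (hWdiff τ).hasDerivAt) hbound
      rw [hWs₁] at h1
      have h2 : W t ≤ |0 - W t| := by rw [zero_sub, abs_neg]; exact le_abs_self _
      calc W t ≤ |0 - W t| := h2
        _ ≤ (|c| * M + C*M*d)*(s₁ - t) := h1
        _ ≤ (|c| * M + C*M*d)*d := by
            apply mul_le_mul_of_nonneg_left (by linarith [ht.1])
            have h4 := mul_nonneg (abs_nonneg c) hM0
            have h5 := mul_nonneg (mul_nonneg hC0.le hM0) hd0.le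
            linarith
    -- closing the loop
    have hfinal : M ≤ (H*d*(|c| + C*d))*M := by
      have h1 : U t₁ = h t₁ * W t₁ := hUW t₁
      have h2 : h t₁ * W t₁ ≤ H * W t₁ :=
        mul_le_mul_of_nonneg_right (hhH t₁ ht₁mem) (hW0 t₁)
      have h3 : H * W t₁ ≤ H * ((|c| * M + C*M*d)*d) :=
        mul_le_mul_of_nonneg_left (hWt t₁ ht₁mem) hH0.le
      have h4 : H * ((|c| * M + C*M*d)*d) = (H*d*(|c| + C*d))*M := by ring
      calc M = U t₁ := hUt₁M.symm
        _ = h t₁ * W t₁ := h1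
        _ ≤ H * W t₁ := h2
        _ ≤ H * ((|c| * M + C*M*d)*d) := h3
        _ = (H*d*(|c| + C*d))*M := h4
    have hMzero : M = 0 := by nlinarith [hkeyd, hM0, hfinal]
    have hs₁dS : s₁ - d ∈ S := by
      intro z hz
      rcases le_or_gt z s₁ with hzle | hzgt
      · exact le_antisymm (hMzero ▸ hMB z (mem_Icc.mpr ⟨hz, hzle⟩)) (hU0 z)
      · exact hstrict z hzgt
    have := csInf_le hSbdd hs₁dS
    rw [← hs₁def] at this
    linarith
  · push_neg at hcase
    have hUpos : ∀ z, Z₀ ≤ z → 0 < U z :=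
      fun z hz => lt_of_le_of_ne (hU0 z) (Ne.symm (hcase z hz))
    have hWpos : ∀ z, Z₀ ≤ z → 0 < W z :=
      fun z hz => mul_pos (Real.rpow_pos_of_pos (h1V z) _) (hUpos z hz)
    rcases le_or_gt c 0 with hc0 | hc0
    · -- c ≤ 0 : W is nondecreasing on [Z₀,∞) with limit 0, but W Z₀ > 0
      have hdW : ∀ z, Z₀ ≤ z → 0 ≤ deriv W z := by
        intro z hz
        have h1 : deriv W z = T z - c * U z := by
          show deriv W z = (deriv W z + c * U z) - c * U z; ring
        have h2 : 0 ≤ -c * U z := mul_nonneg (by linarith) (hU0 z)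
        have := hTnonneg z hz
        nlinarith
      have hmono : ∀ y, Z₀ ≤ y → W Z₀ ≤ W y := by
        intro y hy
        exact mono_of_derivGE (f' := fun z => deriv W z)
          (fun z _ => (hWdiff z).hasDerivAt) hdW le_rfl hy
      have : W Z₀ ≤ 0 :=
        ge_of_tendsto hWtop (eventually_atTop.mpr ⟨Z₀, fun y hy => hmono y hy⟩)
      linarith [hWpos Z₀ le_rfl]
    · -- 0 < c < 2√a : Riccati blow-up
      have hsq : Real.sqrt a ^ 2 = a := Real.sq_sqrt ha.le
      have hc2 : c^2 < 4*a := by nlinarith [Real.sqrt_nonneg a]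
      set A₀ := a - c^2/4 with hA₀def
      have hA₀ : 0 < A₀ := by rw [hA₀def]; linarith
      set ε₀ := A₀/2 with hε₀def
      have hε₀ : 0 < ε₀ := by rw [hε₀def]; linarith
      set δ := min (min 1 a) (min (A₀/(8*(a+1))) (A₀/(8*(c^2+1)))) with hδdef
      have hδ0 : 0 < δ :=
        lt_min (lt_min one_pos ha) (lt_min (by positivity) (by positivity))
      have hδ1 : δ ≤ 1 := le_trans (min_le_left _ _) (min_le_left _ _)
      have hδa : δ ≤ a := le_trans (min_le_left _ _) (min_le_right _ _)
      have hδ3 : δ * (8*(a+1)) ≤ A₀ := by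
        have h1 : δ ≤ A₀/(8*(a+1)) := le_trans (min_le_right _ _) (min_le_left _ _)
        rw [le_div_iff₀ (by positivity)] at h1
        linarith
      have hδ4 : δ * (8*(c^2+1)) ≤ A₀ := by
        have h1 : δ ≤ A₀/(8*(c^2+1)) := le_trans (min_le_right _ _) (min_le_right _ _)
        rw [le_div_iff₀ (by positivity)] at h1
        linarith
      clear_value δ
      clear_value A₀
      clear_value ε₀
      set RR := 2*(c*(1+δ) + δ + 1) with hRRdef
      have hRR0 : 0 < RR := by rw [hRRdef]; nlinarith
      -- claim A : the Riccati quadratic is uniformly positive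
      have claimA : ∀ s hh e u : ℝ, |hh - 1| ≤ δ → |e| ≤ δ → 0 ≤ u → u ≤ δ →
          ε₀ ≤ s^2 + c*hh*s + e + hh*(a - u) := by
        intro s hh e u h1 h2 h3 h4
        obtain ⟨h1a, h1b⟩ := abs_le.mp h1
        obtain ⟨h2a, h2b⟩ := abs_le.mp h2
        have k1 : (1-δ)*(a-δ) ≤ hh*(a-u) :=
          mul_le_mul (by linarith) (by linarith) (by linarith) (by linarith)
        have k2 : -(c*(1+δ)*|s|) ≤ c*hh*s := by
          have e2 : |c*hh*s| ≤ c*(1+δ)*|s| := by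
            rw [abs_mul, abs_mul, abs_of_pos hc0]
            apply mul_le_mul_of_nonneg_right _ (abs_nonneg s)
            apply mul_le_mul_of_nonneg_left _ hc0.le
            exact abs_le.mpr ⟨by linarith, by linarith⟩
          linarith [neg_abs_le (c*hh*s)]
        have k3 : s^2 = |s|^2 := (sq_abs s).symm
        have k4 : c*(1+δ)*|s| ≤ |s|^2 + c^2*(1+δ)^2/4 := by
          nlinarith [sq_nonneg (|s| - c*(1+δ)/2)]
        have hδδ : δ*δ ≤ δ := by nlinarith
        have k5 : c^2*(1+δ)^2/4 ≤ c^2/4 + (3/4)*(c^2*δ) := by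
          nlinarith [mul_nonneg (sq_nonneg c) (show (0:ℝ) ≤ δ - δ*δ by linarith)]
        have k6 : c^2*δ ≤ A₀/8 := by nlinarith [hδ4, hδ0]
        have k7 : δ*(a+1) ≤ A₀/8 := by linarith [hδ3]
        nlinarith [k1, k2, k3, k4, k5, k6, k7, h2a, mul_self_nonneg δ, hA₀]
      -- claim B : for very negative s the quadratic dominates s²/2
      have claimB : ∀ s hh e u : ℝ, |hh - 1| ≤ δ → |e| ≤ δ → 0 ≤ u → u ≤ δ →
          s ≤ -RR → s^2/2 ≤ s^2 + c*hh*s + e + hh*(a - u) := by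
        intro s hh e u h1 h2 h3 h4 hs
        obtain ⟨h1a, h1b⟩ := abs_le.mp h1
        obtain ⟨h2a, h2b⟩ := abs_le.mp h2
        have k1 : 0 ≤ hh*(a-u) := mul_nonneg (by linarith) (by linarith)
        have k2 : c*(1+δ)*s ≤ c*hh*s := by
          have e2 : c*hh ≤ c*(1+δ) := mul_le_mul_of_nonneg_left (by linarith) hc0.le
          exact mul_le_mul_of_nonpos_right e2 (by nlinarith)
        have k3 : RR ≤ -s := by linarith
        have k5 : (2*(c*(1+δ) + δ + 1))*(-s) ≤ (-s)*(-s) := by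
          rw [← hRRdef]; exact mul_le_mul_of_nonneg_right k3 (by linarith)
        have k6 : (δ+1)*(2*(c*(1+δ) + δ + 1)) ≤ (δ+1)*(-s) := by
          rw [← hRRdef]; exact mul_le_mul_of_nonneg_left k3 (by linarith)
        have k7 : δ ≤ (δ+1)*(2*(c*(1+δ) + δ + 1)) := by
          nlinarith [mul_pos hc0 hδ0, sq_nonneg (1+δ), mul_nonneg hc0.le (sq_nonneg (1+δ))]
        nlinarith [k1, k2, h2a, k5, k6, k7]
      -- V' tends to 0 at +∞
      have hVd : ∀ z, HasDerivAt V (deriv V z) z := fun z => (hVdiff z).hasDerivAt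
      have hVderiv : Tendsto (deriv V) atTop (nhds 0) := by
        rw [Metric.tendsto_atTop]
        intro ε hε
        have hε3 : 0 < ε/3 := by positivity
        obtain ⟨Z₂, hZ₂⟩ : ∃ N, ∀ z ≥ N, |V z - U z| ≤ c*(ε/3) := by
          have h3 : Tendsto (fun z => V z - U z) atTop (nhds 0) := by
            simpa using hVtop.sub hUtop
          rw [Metric.tendsto_atTop] at h3
          obtain ⟨N, hN⟩ := h3 (c*(ε/3)) (by positivity)
          refine ⟨N, fun z hz => ?_⟩
          have := hN z hz
          rw [Real.dist_eq, sub_zero] at this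
          exact this.le
        set g := fun z => Real.exp (c*z) * deriv V z with hgdef
        have hgd : ∀ z, HasDerivAt g (Real.exp (c*z) * (V z - U z)) z := by
          intro z
          have he : HasDerivAt (fun y => Real.exp (c*y)) (Real.exp (c*z) * (c*1)) z :=
            ((hasDerivAt_id z).const_mul c).exp
          have hv : HasDerivAt (deriv V) (deriv (deriv V) z) z := (hV'diff z).hasDerivAt
          apply (he.mul hv).congr_deriv
          linear_combination Real.exp (c*z) * hEqV z
        have hup : ∀ z, Z₂ ≤ z → g z ≤ |g Z₂| + (ε/3)*Real.exp (c*z) := by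
          intro z hz
          have hanti := anti_of_derivLE (f := fun y => g y - (ε/3)*Real.exp (c*y))
            (f' := fun y => Real.exp (c*y) * (V y - U y) - (ε/3)*(Real.exp (c*y) * (c*1)))
            (fun t _ => (hgd t).sub (((((hasDerivAt_id t).const_mul c).exp)).const_mul (ε/3)))
            (fun t ht => ?_) le_rfl hz
          · have := neg_abs_le (g Z₂)
            have hpos := Real.exp_pos (c*Z₂)
            have h6 : 0 < (ε/3)*Real.exp (c*Z₂) := by positivity
            linarith [le_abs_self (g Z₂)]
          · have h7 := hZ₂ t ht
            have h8 : V t - U t ≤ c*(ε/3) := le_trans (le_abs_self _) h7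
            have h9 : Real.exp (c*t) * ((V t - U t) - c*(ε/3)) ≤ 0 :=
              mul_nonpos_of_nonneg_of_nonpos (Real.exp_nonneg _) (by linarith)
            nlinarith [h9]
        have hdown : ∀ z, Z₂ ≤ z → -(|g Z₂| + (ε/3)*Real.exp (c*z)) ≤ g z := by
          intro z hz
          have hmono := mono_of_derivGE (f := fun y => g y + (ε/3)*Real.exp (c*y))
            (f' := fun y => Real.exp (c*y) * (V y - U y) + (ε/3)*(Real.exp (c*y) * (c*1)))
            (fun t _ => (hgd t).add (((((hasDerivAt_id t).const_mul c).exp)).const_mul (ε/3)))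
            (fun t ht => ?_) le_rfl hz
          · have := neg_abs_le (g Z₂)
            have h6 : 0 < (ε/3)*Real.exp (c*Z₂) := by positivity
            linarith
          · have h7 := hZ₂ t ht
            have h8 : -(c*(ε/3)) ≤ V t - U t := by
              have := neg_abs_le (V t - U t); linarith
            have h9 : 0 ≤ Real.exp (c*t) * ((V t - U t) + c*(ε/3)) :=
              mul_nonneg (Real.exp_nonneg _) (by linarith)
            nlinarith [h9]
        have hexp : Tendsto (fun z => |g Z₂| / Real.exp (c*z)) atTop (nhds 0) := by
          apply Tendsto.div_atTop tendsto_const_nhds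
          exact Real.tendsto_exp_atTop.comp (tendsto_id.const_mul_atTop hc0)
        obtain ⟨Z₅, hZ₅⟩ := eventually_atTop.mp
          (hexp.eventually (eventually_lt_nhds hε3))
        refine ⟨max Z₂ Z₅, fun z hz => ?_⟩
        have hz2 : Z₂ ≤ z := le_trans (le_max_left _ _) hz
        have hz5 : Z₅ ≤ z := le_trans (le_max_right _ _) hz
        rw [Real.dist_eq, sub_zero]
        have hgz : |g z| ≤ |g Z₂| + (ε/3)*Real.exp (c*z) :=
          abs_le.mpr ⟨hdown z hz2, hup z hz2⟩
        have hepos : 0 < Real.exp (c*z) := Real.exp_pos _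
        have hdV : deriv V z = g z / Real.exp (c*z) := by
          rw [hgdef]
          field_simp
        rw [hdV, abs_div, abs_of_pos hepos]
        have h10 : |g z| / Real.exp (c*z) ≤ (|g Z₂| + (ε/3)*Real.exp (c*z)) / Real.exp (c*z) :=
          (div_le_div_iff_of_pos_right hepos).mpr hgz
        have h11 : (|g Z₂| + (ε/3)*Real.exp (c*z)) / Real.exp (c*z)
            = |g Z₂|/Real.exp (c*z) + ε/3 := by
          field_simp
        have h12 := hZ₅ z hz5
        linarith
      -- h and h' tend to their limits
      have hplus : Tendsto (fun z => 1 + V z) atTop (nhds 1) := by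
        have h1 : Tendsto (fun z => (1:ℝ) + V z) atTop (nhds (1 + 0)) :=
          (tendsto_const_nhds : Tendsto (fun _ : ℝ => (1:ℝ)) atTop (nhds 1)).add hVtop
        simpa using h1
      have hhtop : Tendsto h atTop (nhds 1) := by
        have hct : ContinuousAt (fun x : ℝ => x ^ m) 1 :=
          Real.continuousAt_rpow_const 1 m (Or.inl one_ne_zero)
        have := hct.tendsto.comp hplus
        simpa [Function.comp_def, Real.one_rpow, hhdef] using this
      have hh1top : Tendsto (fun z => (1 + V z) ^ (m-1)) atTop (nhds 1) := by
        have hct : ContinuousAt (fun x : ℝ => x ^ (m-1)) 1 :=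
          Real.continuousAt_rpow_const 1 (m-1) (Or.inl one_ne_zero)
        have := hct.tendsto.comp hplus
        simpa [Function.comp_def, Real.one_rpow] using this
      set hD := fun z => m * (1 + V z)^(m-1) * deriv V z with hDdef
      have hhd : ∀ z, HasDerivAt h (hD z) z := by
        intro z
        have h1 : HasDerivAt (fun y => 1 + V y) (deriv V z) z := by
          exact ((hasDerivAt_const z (1:ℝ)).add (hVd z)).congr_deriv (zero_add _)
        have h2 := (Real.hasDerivAt_rpow_const
          (x := 1 + V z) (p := m) (Or.inl (ne_of_gt (h1V z)))).comp z h1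
        have h3 : HasDerivAt (fun y => (1 + V y) ^ m)
            (m * (1 + V z) ^ (m-1) * deriv V z) z := by
          simpa [Function.comp_def, mul_assoc] using h2
        exact h3.congr_deriv (by rw [hDdef])
      have hcD : Tendsto (fun z => c * hD z) atTop (nhds 0) := by
        have h1 : Tendsto hD atTop (nhds (m * 1 * 0)) :=
          (tendsto_const_nhds.mul hh1top).mul hVderiv
        have h2 := h1.const_mul c
        simpa using h2
      have hbU : Tendsto (fun z => b * U z) atTop (nhds 0) := by
        simpa using hUtop.const_mul b
      obtain ⟨N₁, hN₁⟩ := Metric.tendsto_atTop.mp hhtop δ hδ0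
      obtain ⟨N₂, hN₂⟩ := Metric.tendsto_atTop.mp hcD δ hδ0
      obtain ⟨N₃, hN₃⟩ := Metric.tendsto_atTop.mp hbU δ hδ0
      set Z₃ := max (max N₁ N₂) (max N₃ Z₀) with hZ₃def
      have hZ₃Z₀ : Z₀ ≤ Z₃ := le_trans (le_max_right N₃ Z₀) (le_max_right _ _)
      have conds : ∀ z, Z₃ ≤ z → |h z - 1| ≤ δ ∧ |c * hD z| ≤ δ ∧ b * U z ≤ δ := by
        intro z hz
        have l1 : N₁ ≤ z := le_trans (le_trans (le_max_left _ _) (le_max_left _ _)) hz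
        have l2 : N₂ ≤ z := le_trans (le_trans (le_max_right _ _) (le_max_left _ _)) hz
        have l3 : N₃ ≤ z := le_trans (le_trans (le_max_left _ _) (le_max_right _ _)) hz
        refine ⟨?_, ?_, ?_⟩
        · have := hN₁ z l1; rw [Real.dist_eq] at this; exact this.le
        · have := hN₂ z l2; rw [Real.dist_eq, sub_zero] at this; exact this.le
        · have := hN₃ z l3; rw [Real.dist_eq, sub_zero] at this
          exact le_trans (le_abs_self _) this.le
      -- the Riccati variable r = W'/W
      set r := fun z => deriv W z / W z with hrdef
      have hrd : ∀ z, Z₀ ≤ z → HasDerivAt r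
          (-((r z)^2 + c * h z * r z + c * hD z + h z * (a - b * U z))) z := by
        intro z hz
        have hWz : W z ≠ 0 := ne_of_gt (hWpos z hz)
        have hdd : HasDerivAt (deriv W) (deriv (deriv W) z) z := (hW'diff z).hasDerivAt
        have hdW : HasDerivAt W (deriv W z) z := (hWdiff z).hasDerivAt
        have hdiv := hdd.div hdW hWz
        apply hdiv.congr_deriv
        have e1 : deriv (deriv W) z = -(c * deriv U z + U z * (a - b * U z)) := by
          linarith [hEqU z]
        have e2 : deriv U z = hD z * W z + h z * deriv W z := by
          have hUfun : U = fun y => h y * W y := funext hUW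
          rw [hUfun]
          exact ((hhd z).mul hdW).deriv
        rw [e1, e2, hrdef]
        dsimp only
        rw [hUW z]
        field_simp
        ring
      have hQ : ∀ z, Z₃ ≤ z →
          ε₀ ≤ (r z)^2 + c * h z * r z + c * hD z + h z * (a - b * U z) := by
        intro z hz
        obtain ⟨c1, c2, c3⟩ := conds z hz
        exact claimA (r z) (h z) (c * hD z) (b * U z) c1 c2
          (mul_nonneg hb.le (hU0 z)) c3
      have hrbound : ∀ z, Z₃ ≤ z → r z ≤ r Z₃ + ε₀ * Z₃ - ε₀ * z := by
        intro z hz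
        have hanti := anti_of_derivLE (f := fun y => r y + ε₀ * y)
          (f' := fun y => -((r y)^2 + c * h y * r y + c * hD y + h y * (a - b*U y)) + ε₀)
          (fun t ht => ((hrd t (le_trans hZ₃Z₀ ht)).add
            (((hasDerivAt_id t).const_mul ε₀).congr_deriv (by ring))))
          (fun t ht => by linarith [hQ t ht]) le_rfl hz
        linarith
      set Z₄ := max Z₃ (Z₃ + (r Z₃ + RR)/ε₀) with hZ₄def
      have hZ₄Z₃ : Z₃ ≤ Z₄ := le_max_left _ _
      have hrRR : ∀ z, Z₄ ≤ z → r z ≤ -RR := by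
        intro z hz
        have h1 : Z₃ ≤ z := le_trans hZ₄Z₃ hz
        have h2 : Z₃ + (r Z₃ + RR)/ε₀ ≤ z := le_trans (le_max_right _ _) hz
        have h3 : (r Z₃ + RR)/ε₀ ≤ z - Z₃ := by linarith
        rw [div_le_iff₀ hε₀] at h3
        have h4 := hrbound z h1
        nlinarith [h3, h4, hε₀]
      have hrneg : ∀ z, Z₄ ≤ z → r z < 0 :=
        fun z hz => lt_of_le_of_lt (hrRR z hz) (by linarith)
      have hφd : ∀ z, Z₄ ≤ z → HasDerivAt (fun y => (r y)⁻¹)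
          (((r z)^2 + c*h z*r z + c*hD z + h z*(a - b*U z))/(r z)^2) z := by
        intro z hz
        have h1 := (hrd z (le_trans hZ₃Z₀ (le_trans hZ₄Z₃ hz))).inv
          (ne_of_lt (hrneg z hz))
        apply h1.congr_deriv
        rw [neg_neg]
      have hmono2 : ∀ z, Z₄ ≤ z → (r Z₄)⁻¹ - (1/2)*Z₄ ≤ (r z)⁻¹ - (1/2)*z := by
        intro z hz
        have hmono := mono_of_derivGE (f := fun y => (r y)⁻¹ - (1/2)*y)
          (f' := fun y => ((r y)^2 + c*h y*r y + c*hD y + h y*(a - b*U y))/(r y)^2 - 1/2)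
          (fun t ht => (hφd t ht).sub
            (((hasDerivAt_id t).const_mul (1/2)).congr_deriv (by ring)))
          (fun t ht => ?_) le_rfl hz
        · linarith
        · obtain ⟨c1, c2, c3⟩ := conds t (le_trans hZ₄Z₃ ht)
          have hBB := claimB (r t) (h t) (c*hD t) (b*U t) c1 c2
            (mul_nonneg hb.le (hU0 t)) c3 (hrRR t ht)
          have hr2 : 0 < (r t)^2 := by nlinarith [hrneg t ht]
          have h5 : (r t)^2/2 / (r t)^2 ≤
              ((r t)^2 + c*h t*r t + c*hD t + h t*(a - b*U t))/(r t)^2 :=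
            (div_le_div_iff_of_pos_right hr2).mpr hBB
          have h6 : (r t)^2/2/(r t)^2 = 1/2 := by
            field_simp
            exact mul_inv_cancel₀ (ne_of_lt (hrneg t ht))
          linarith
      -- conclusion : r⁻¹ becomes positive, contradiction
      set zf := Z₄ + 2*|(r Z₄)⁻¹| + 2 with hzf
      have hzf1 : Z₄ ≤ zf := by
        rw [hzf]; linarith [abs_nonneg ((r Z₄)⁻¹)]
      have h2 := hmono2 zf hzf1
      have h3 : (r zf)⁻¹ < 0 := inv_lt_zero.mpr (hrneg zf hzf1)
      have h4 : -|(r Z₄)⁻¹| ≤ (r Z₄)⁻¹ := neg_abs_le _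
      rw [hzf] at h2
      linarith
end

section
/- Let a, m > 0 and c ≥ 2√a, and set λ = (c − √(c² − 4a))/2, φ(x) = 1 + e^{−λx}/(1+a) and θ₁(x) = (c − √(c² − 4a·φ(x)^{−m}))/(2·φ(x)^{−m}). Then lim_{x→+∞} e^{(θ₁(x) − λ)·x} = 1. -/
open Real Filter

private lemma sqrt_add_le' (x y : ℝ) (hx : 0 ≤ x) (hy : 0 ≤ y) :
    Real.sqrt (x + y) ≤ Real.sqrt x + Real.sqrt y := by
  have h : x + y ≤ (Real.sqrt x + Real.sqrt y) ^ 2 := by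
    nlinarith [Real.sq_sqrt hx, Real.sq_sqrt hy,
      mul_nonneg (Real.sqrt_nonneg x) (Real.sqrt_nonneg y)]
  calc Real.sqrt (x + y) ≤ Real.sqrt ((Real.sqrt x + Real.sqrt y) ^ 2) := Real.sqrt_le_sqrt h
    _ = Real.sqrt x + Real.sqrt y := Real.sqrt_sq (by positivity)

set_option maxHeartbeats 1600000 in
/-- `e^{(θ₁(x) − λ)x} → 1` as `x → +∞`. -/
theorem exp_theta1_sub_lam_tendsto_one
    (a m c : ℝ) (ha : 0 < a) (hm : 0 < m) (hc : 2 * Real.sqrt a ≤ c)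
    (lam : ℝ) (hlam : lam = (c - Real.sqrt (c ^ 2 - 4 * a)) / 2)
    (φ θ₁ : ℝ → ℝ)
    (hφ : ∀ x, φ x = 1 + Real.exp (-lam * x) / (1 + a))
    (hθ₁ : ∀ x, θ₁ x = (c - Real.sqrt (c ^ 2 - 4 * a * (φ x) ^ (-m)))
        / (2 * (φ x) ^ (-m))) :
    Tendsto (fun x => Real.exp ((θ₁ x - lam) * x)) atTop (nhds 1) := by
  have hsa : 0 < Real.sqrt a := Real.sqrt_pos.2 ha
  have hc0 : 0 < c := lt_of_lt_of_le (by positivity) hc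
  have hc2 : 4 * a ≤ c ^ 2 := by nlinarith [Real.sq_sqrt ha.le]
  set D₀ : ℝ := Real.sqrt (c ^ 2 - 4 * a) with hD₀def
  have hD0nn : 0 ≤ D₀ := Real.sqrt_nonneg _
  have hD0sq : D₀ ^ 2 = c ^ 2 - 4 * a := Real.sq_sqrt (by linarith)
  have hD0 : D₀ < c := by nlinarith
  have hlam_pos : 0 < lam := by rw [hlam]; linarith
  have hlam' : lam = 2 * a / (c + D₀) := by
    have hne : c + D₀ ≠ 0 := by positivity
    rw [hlam]; field_simp; nlinarith
  set C : ℝ := 4 * a * Real.sqrt a / c ^ 2 * Real.sqrt (m * Real.exp m) with hC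
  have hCnn : 0 ≤ C := by positivity
  -- key pointwise estimate
  have key : ∀ x : ℝ, 0 ≤ x →
      0 ≤ lam - θ₁ x ∧ lam - θ₁ x ≤ C * Real.exp (-(lam / 2) * x) := by
    intro x hx
    set u : ℝ := Real.exp (-lam * x) / (1 + a) with hu
    have hu0 : 0 < u := by positivity
    have huexp : u ≤ Real.exp (-lam * x) := by
      rw [hu]
      exact div_le_self (Real.exp_pos _).le (by linarith)
    have hu1 : u ≤ 1 := by
      have h1 : Real.exp (-lam * x) ≤ 1 := by
        rw [Real.exp_le_one_iff]; nlinarith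
      linarith
    have hφx : φ x = 1 + u := by rw [hφ, hu]
    set s : ℝ := (φ x) ^ (-m) with hs
    have hφ1 : (1 : ℝ) ≤ φ x := by rw [hφx]; linarith
    have hφpos : (0 : ℝ) < φ x := by linarith
    have hs0 : 0 < s := Real.rpow_pos_of_pos hφpos _
    have hs1 : s ≤ 1 := Real.rpow_le_one_of_one_le_of_nonpos hφ1 (by linarith)
    -- 1 - s ≤ m * exp m * u
    have hbound : 1 - s ≤ m * Real.exp m * u := by
      set A : ℝ := (φ x) ^ m with hA
      have hApos : 0 < A := Real.rpow_pos_of_pos hφpos _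
      have hA1 : 1 ≤ A := by
        have := Real.rpow_le_rpow zero_le_one hφ1 hm.le
        simpa [hA, Real.one_rpow] using this
      have hAexp : A ≤ Real.exp (m * u) := by
        calc A ≤ (Real.exp u) ^ m := by
              apply Real.rpow_le_rpow hφpos.le _ hm.le
              rw [hφx]; linarith [Real.add_one_le_exp u]
          _ = Real.exp (u * m) := (Real.exp_mul u m).symm
          _ = Real.exp (m * u) := by rw [mul_comm]
      have hsinv : s = A⁻¹ := by rw [hs, hA, Real.rpow_neg hφpos.le]
      have hAs : A * s = 1 := by rw [hsinv]; field_simp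
      have h1 : 1 - s ≤ A - 1 := by
        nlinarith [mul_nonneg (sub_nonneg.2 hA1) (sub_nonneg.2 hs1)]
      have h2 : Real.exp (m * u) - 1 ≤ m * u * Real.exp (m * u) := by
        have h3 := Real.add_one_le_exp (-(m * u))
        have h4 : 0 < Real.exp (m * u) := Real.exp_pos _
        have h5 : Real.exp (-(m * u)) * Real.exp (m * u) = 1 := by
          rw [← Real.exp_add]; simp
        nlinarith
      have h6 : Real.exp (m * u) ≤ Real.exp m := by
        apply Real.exp_le_exp.2; nlinarith
      have h7 : m * u * Real.exp (m * u) ≤ m * u * Real.exp m :=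
        mul_le_mul_of_nonneg_left h6 (mul_nonneg hm.le hu0.le)
      have h8 : m * u * Real.exp m = m * Real.exp m * u := by ring
      linarith
    -- the square roots
    have hcs0 : 0 ≤ c ^ 2 - 4 * a * s := by nlinarith [mul_nonneg ha.le (sub_nonneg.2 hs1)]
    set D : ℝ := Real.sqrt (c ^ 2 - 4 * a * s) with hDdef
    have hDnn : 0 ≤ D := Real.sqrt_nonneg _
    have hDsq : D ^ 2 = c ^ 2 - 4 * a * s := Real.sq_sqrt hcs0
    have hDge : D₀ ≤ D := Real.sqrt_le_sqrt (by nlinarith)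
    have hDle : D ≤ D₀ + 2 * Real.sqrt a * Real.sqrt (1 - s) := by
      have heq : c ^ 2 - 4 * a * s = (c ^ 2 - 4 * a) + 4 * a * (1 - s) := by ring
      have h4a : Real.sqrt (4 * a * (1 - s)) = 2 * Real.sqrt a * Real.sqrt (1 - s) := by
        rw [show (4 : ℝ) * a * (1 - s) = (2 * Real.sqrt a) ^ 2 * (1 - s) by
              nlinarith [Real.sq_sqrt ha.le],
          Real.sqrt_mul (by positivity), Real.sqrt_sq (by positivity)]
      calc D = Real.sqrt ((c ^ 2 - 4 * a) + 4 * a * (1 - s)) := by rw [hDdef, heq]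
        _ ≤ D₀ + Real.sqrt (4 * a * (1 - s)) :=
            sqrt_add_le' _ _ (by linarith) (by nlinarith)
        _ = D₀ + 2 * Real.sqrt a * Real.sqrt (1 - s) := by rw [h4a]
    -- rationalized θ₁
    have hθeq : θ₁ x = 2 * a / (c + D) := by
      have hne : c + D ≠ 0 := by positivity
      rw [hθ₁, ← hs, ← hDdef]
      field_simp
      nlinarith
    have hfrac : lam - θ₁ x = 2 * a * (D - D₀) / ((c + D₀) * (c + D)) := by
      rw [hlam', hθeq]
      field_simp
      ring
    have hden : c * c ≤ (c + D₀) * (c + D) := by nlinarith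
    have hnonneg : 0 ≤ lam - θ₁ x := by
      rw [hfrac]
      apply div_nonneg (by nlinarith) (by positivity)
    refine ⟨hnonneg, ?_⟩
    have hstep1 : lam - θ₁ x ≤ 2 * a * (D - D₀) / (c * c) := by
      rw [hfrac]
      exact div_le_div_of_nonneg_left (by nlinarith) (by positivity) hden
    -- bound sqrt(1-s)
    have hsq1s : Real.sqrt (1 - s) ≤ Real.sqrt (m * Real.exp m) * Real.exp (-(lam / 2) * x) := by
      have h1 : Real.sqrt (1 - s) ≤ Real.sqrt (m * Real.exp m * Real.exp (-lam * x)) := by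
        apply Real.sqrt_le_sqrt
        calc 1 - s ≤ m * Real.exp m * u := hbound
          _ ≤ m * Real.exp m * Real.exp (-lam * x) := by
              apply mul_le_mul_of_nonneg_left huexp (by positivity)
      have h2 : Real.sqrt (Real.exp (-lam * x)) = Real.exp (-(lam / 2) * x) := by
        rw [show Real.exp (-lam * x) = (Real.exp (-(lam / 2) * x)) ^ 2 by
          rw [← Real.exp_nat_mul]; congr 1; push_cast; ring]
        exact Real.sqrt_sq (Real.exp_pos _).le
      rw [Real.sqrt_mul (by positivity)] at h1
      rw [h2] at h1
      exact h1
    have hE2 : 0 < Real.exp (-(lam / 2) * x) := Real.exp_pos _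
    calc lam - θ₁ x ≤ 2 * a * (D - D₀) / (c * c) := hstep1
      _ ≤ 2 * a * (2 * Real.sqrt a * (Real.sqrt (m * Real.exp m)
            * Real.exp (-(lam / 2) * x))) / (c * c) := by
          gcongr 2 * a * ?_ / (c * c)
          nlinarith [Real.sqrt_nonneg (1 - s), Real.sqrt_nonneg (m * Real.exp m), hsa]
      _ = C * Real.exp (-(lam / 2) * x) := by
          rw [hC]; field_simp; ring
  -- squeeze
  have h0 : Tendsto (fun x => (θ₁ x - lam) * x) atTop (nhds 0) := by
    have hg : Tendsto (fun x : ℝ => -(C * (x ^ (1 : ℝ) * Real.exp (-(lam / 2) * x))))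
        atTop (nhds 0) := by
      have := (tendsto_rpow_mul_exp_neg_mul_atTop_nhds_zero 1 (lam / 2)
        (by positivity)).const_mul C
      simpa using this.neg
    refine tendsto_of_tendsto_of_tendsto_of_le_of_le' hg tendsto_const_nhds ?_ ?_
    · filter_upwards [eventually_ge_atTop 0] with x hx
      obtain ⟨h1, h2⟩ := key x hx
      rw [Real.rpow_one]
      nlinarith [Real.exp_pos (-(lam / 2) * x)]
    · filter_upwards [eventually_ge_atTop 0] with x hx
      obtain ⟨h1, h2⟩ := key x hx
      nlinarith
  have hfin : Tendsto (fun x => Real.exp ((θ₁ x - lam) * x)) atTop (nhds (Real.exp 0)) :=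
    (Real.continuous_exp.tendsto 0).comp h0
  simpa using hfin
end

section
/- Let a, m > 0 and c = 2√a, so λ = (c − √(c² − 4a))/2 = √a, and set φ(x) = 1 + e^{−λx}/(1+a), θ₁(x) = (c − √(c² − 4a·φ(x)^{−m}))/(2·φ(x)^{−m}) and K₁ = (a/2)·√(m/(1+a)). Then there exists x₀ ∈ ℝ such that for all x > x₀: 0 < θ₁'(x) ≤ 2K₁·e^{−(λ/2)x} and −λK₁·e^{−(λ/2)x} ≤ θ₁''(x) < 0. -/
open Real Filter
noncomputable section ThAux
variable (a m : ℝ)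
def ph (x : ℝ) : ℝ := 1 + Real.exp (-(Real.sqrt a) * x) / (1 + a)
def sq' (x : ℝ) : ℝ := Real.sqrt (1 - ph a x ^ (-m))
def th (x : ℝ) : ℝ := Real.sqrt a / (1 + sq' a m x)
def qq (x : ℝ) : ℝ := (ph a x - 1) * ph a x ^ (-m - 1)
def sd (x : ℝ) : ℝ := (-(m * Real.sqrt a) * qq a m x) / (2 * sq' a m x)
def d1 (x : ℝ) : ℝ := (Real.sqrt a * (-(sd a m x))) / ((1 + sq' a m x) ^ 2)
def qd (x : ℝ) : ℝ := (-(Real.sqrt a) * (ph a x - 1)) *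
    (ph a x ^ (-m - 1) - (m + 1) * (ph a x - 1) * ph a x ^ (-m - 2))
def sdd (x : ℝ) : ℝ := ((-(m * Real.sqrt a) * qd a m x) * (2 * sq' a m x)
    - (-(m * Real.sqrt a) * qq a m x) * (2 * sd a m x)) / (2 * sq' a m x) ^ 2
def d2 (x : ℝ) : ℝ := ((Real.sqrt a * (-(sdd a m x))) * ((1 + sq' a m x) ^ 2)
    - (Real.sqrt a * (-(sd a m x))) * (2 * (1 + sq' a m x) ^ 1 * sd a m x))
    / (((1 + sq' a m x) ^ 2) ^ 2)
variable {a m}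
theorem ph_gt_one (ha : 0 < a) (x : ℝ) : 1 < ph a x := by
  have : 0 < Real.exp (-(Real.sqrt a) * x) / (1 + a) :=
    div_pos (Real.exp_pos _) (by linarith)
  simp only [ph]; linarith
theorem ph_pos (ha : 0 < a) (x : ℝ) : 0 < ph a x := lt_trans one_pos (ph_gt_one ha x)
theorem u_pos (ha : 0 < a) (x : ℝ) : 0 < ph a x ^ (-m) :=
  Real.rpow_pos_of_pos (ph_pos ha x) _
theorem u_lt_one (ha : 0 < a) (hm : 0 < m) (x : ℝ) : ph a x ^ (-m) < 1 :=
  Real.rpow_lt_one_of_one_lt_of_neg (ph_gt_one ha x) (by linarith)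
theorem g_pos (ha : 0 < a) (hm : 0 < m) (x : ℝ) : 0 < 1 - ph a x ^ (-m) := by
  have := u_lt_one ha hm x; linarith
theorem s_pos (ha : 0 < a) (hm : 0 < m) (x : ℝ) : 0 < sq' a m x :=
  Real.sqrt_pos.2 (g_pos ha hm x)
theorem s_sq (ha : 0 < a) (hm : 0 < m) (x : ℝ) :
    sq' a m x ^ 2 = 1 - ph a x ^ (-m) := Real.sq_sqrt (g_pos ha hm x).le
theorem hasDerivAt_ph (ha : 0 < a) (x : ℝ) :
    HasDerivAt (ph a) (-(Real.sqrt a) * (ph a x - 1)) x := by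
  have h1 : HasDerivAt (fun x : ℝ => -(Real.sqrt a) * x) (-(Real.sqrt a)) x := by
    simpa using (hasDerivAt_id x).const_mul (-(Real.sqrt a))
  have h2 := (Real.hasDerivAt_exp (-(Real.sqrt a) * x)).comp x h1
  have h3 := (h2.div_const (1 + a)).const_add 1
  refine h3.congr_deriv ?_
  simp [ph]; ring
theorem hasDerivAt_phpow (ha : 0 < a) (p : ℝ) (x : ℝ) :
    HasDerivAt (fun x => ph a x ^ p)
      ((-(Real.sqrt a) * (ph a x - 1)) * p * ph a x ^ (p - 1)) x :=
  (hasDerivAt_ph ha x).rpow_const (Or.inl (ph_pos ha x).ne')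
theorem hasDerivAt_s (ha : 0 < a) (hm : 0 < m) (x : ℝ) :
    HasDerivAt (sq' a m) (sd a m x) x := by
  have hg : HasDerivAt (fun x => 1 - ph a x ^ (-m))
      (-((-(Real.sqrt a) * (ph a x - 1)) * (-m) * ph a x ^ (-m - 1))) x :=
    (hasDerivAt_phpow ha (-m) x).const_sub 1
  have := hg.sqrt (g_pos ha hm x).ne'
  refine this.congr_deriv ?_
  simp only [sd, qq, sq']
  ring

theorem hasDerivAt_th (ha : 0 < a) (hm : 0 < m) (x : ℝ) :
    HasDerivAt (th a m) (d1 a m x) x := by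
  have hden : HasDerivAt (fun x => 1 + sq' a m x) (sd a m x) x :=
    (hasDerivAt_s ha hm x).const_add 1
  have hden_ne : (1 + sq' a m x) ≠ 0 := by have := s_pos ha hm x; positivity
  have := (hasDerivAt_const x (Real.sqrt a)).div hden hden_ne
  refine this.congr_deriv ?_
  simp only [d1]; ring

theorem hasDerivAt_qq (ha : 0 < a) (hm : 0 < m) (x : ℝ) :
    HasDerivAt (qq a m) (qd a m x) x := by
  have h1 : HasDerivAt (fun x => ph a x - 1) (-(Real.sqrt a) * (ph a x - 1)) x :=
    (hasDerivAt_ph ha x).sub_const 1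
  have h2 := hasDerivAt_phpow ha (-m - 1) x
  have := h1.mul h2
  refine this.congr_deriv ?_
  have he : (-m - 1) - 1 = -m - 2 := by ring
  simp only [qd, he]
  ring

theorem hasDerivAt_sd (ha : 0 < a) (hm : 0 < m) (x : ℝ) :
    HasDerivAt (sd a m) (sdd a m x) x := by
  have hn : HasDerivAt (fun x => -(m * Real.sqrt a) * qq a m x)
      (-(m * Real.sqrt a) * qd a m x) x := (hasDerivAt_qq ha hm x).const_mul _
  have hd : HasDerivAt (fun x => 2 * sq' a m x) (2 * sd a m x) x :=
    (hasDerivAt_s ha hm x).const_mul 2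
  have hne : 2 * sq' a m x ≠ 0 := by have := s_pos ha hm x; positivity
  exact hn.div hd hne

theorem hasDerivAt_d1 (ha : 0 < a) (hm : 0 < m) (x : ℝ) :
    HasDerivAt (d1 a m) (d2 a m x) x := by
  have hn : HasDerivAt (fun x => Real.sqrt a * (-(sd a m x)))
      (Real.sqrt a * (-(sdd a m x))) x := ((hasDerivAt_sd ha hm x).neg).const_mul _
  have hd : HasDerivAt (fun x => (1 + sq' a m x) ^ 2)
      (2 * (1 + sq' a m x) ^ 1 * sd a m x) x := by
    simpa using ((hasDerivAt_s ha hm x).const_add 1).fun_pow 2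
  have hne : (1 + sq' a m x) ^ 2 ≠ 0 := by have := s_pos ha hm x; positivity
  exact hn.div hd hne


/-! ### Asymptotics -/

variable (a)
def EE (x : ℝ) : ℝ := Real.exp (-(Real.sqrt a / 2) * x)
def eps (x : ℝ) : ℝ := Real.exp (-(Real.sqrt a) * x)
variable {a}

theorem eps_eq (x : ℝ) : eps a x = EE a x ^ 2 := by
  rw [eps, EE, sq, ← Real.exp_add]; congr 1; ring

theorem EE_pos (x : ℝ) : 0 < EE a x := Real.exp_pos _
theorem eps_pos (x : ℝ) : 0 < eps a x := Real.exp_pos _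

theorem tendsto_exp_neg_const (hb : (0:ℝ) < b) :
    Tendsto (fun x : ℝ => Real.exp (-b * x)) atTop (nhds 0) := by
  have h1 : Tendsto (fun x : ℝ => b * x) atTop atTop :=
    Tendsto.const_mul_atTop hb tendsto_id
  have h2 : Tendsto (fun x : ℝ => -b * x) atTop atBot := by
    have h3 := tendsto_neg_atTop_atBot.comp h1
    exact h3.congr fun x => (neg_mul b x).symm
  exact Real.tendsto_exp_atBot.comp h2

theorem tendsto_EE (ha : 0 < a) : Tendsto (EE a) atTop (nhds 0) :=
  tendsto_exp_neg_const (by positivity)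

theorem tendsto_eps (ha : 0 < a) : Tendsto (eps a) atTop (nhds 0) :=
  tendsto_exp_neg_const (Real.sqrt_pos.2 ha)

theorem tendsto_ph (ha : 0 < a) : Tendsto (ph a) atTop (nhds 1) := by
  have := ((tendsto_eps ha).div_const (1 + a)).const_add 1
  norm_num at this
  exact this

theorem tendsto_phpow (ha : 0 < a) (p : ℝ) :
    Tendsto (fun x => ph a x ^ p) atTop (nhds 1) := by
  have := (tendsto_ph ha).rpow_const (p := p) (Or.inl one_ne_zero)
  simpa using this

theorem ph_sub_one (x : ℝ) : ph a x - 1 = eps a x / (1 + a) := by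
  simp [ph, eps]

theorem ph_sub_one_pos (ha : 0 < a) (x : ℝ) : 0 < ph a x - 1 := by
  have := ph_gt_one ha x; linarith

theorem tendsto_slope_ratio (ha : 0 < a) (hm : 0 < m) :
    Tendsto (fun x => (1 - ph a x ^ (-m)) / (ph a x - 1)) atTop (nhds m) := by
  set f : ℝ → ℝ := fun t => 1 - t ^ (-m) with hf
  have hder : HasDerivAt f m 1 := by
    have := (Real.hasDerivAt_rpow_const (x := 1) (p := -m) (Or.inl one_ne_zero)).const_sub 1
    simpa [hf, Real.one_rpow] using this
  have hslope := hasDerivAt_iff_tendsto_slope.mp hder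
  have hcomp : Tendsto (ph a) atTop (nhdsWithin 1 {(1:ℝ)}ᶜ) := by
    refine tendsto_nhdsWithin_of_tendsto_nhds_of_eventually_within _ (tendsto_ph ha) ?_
    exact Eventually.of_forall fun x => by simp [(ph_gt_one ha x).ne']
  have := hslope.comp hcomp
  refine this.congr fun x => ?_
  have h1 : f (1:ℝ) = 0 := by simp [hf, Real.one_rpow]
  simp [Function.comp, slope_def_field, hf, Real.one_rpow]

theorem tendsto_G (ha : 0 < a) (hm : 0 < m) :
    Tendsto (fun x => (1 - ph a x ^ (-m)) / eps a x) atTop (nhds (m / (1 + a))) := by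
  have := (tendsto_slope_ratio ha hm).div_const (1 + a)
  refine this.congr fun x => ?_
  have h1 : ph a x - 1 ≠ 0 := (ph_sub_one_pos ha x).ne'
  have h2 : eps a x ≠ 0 := (eps_pos x).ne'
  have hb : (1:ℝ) + a ≠ 0 := by linarith
  rw [ph_sub_one] at h1 ⊢
  field_simp

theorem tendsto_sE (ha : 0 < a) (hm : 0 < m) :
    Tendsto (fun x => sq' a m x / EE a x) atTop (nhds (Real.sqrt (m / (1 + a)))) := by
  have hcont : Tendsto Real.sqrt (nhds (m / (1 + a))) (nhds (Real.sqrt (m / (1 + a)))) :=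
    (Real.continuous_sqrt.tendsto _)
  have := hcont.comp (tendsto_G ha hm)
  refine this.congr fun x => ?_
  have h1 : Real.sqrt (eps a x) = EE a x := by
    rw [eps_eq, Real.sqrt_sq (EE_pos x).le]
  simp only [Function.comp, sq']
  rw [Real.sqrt_div (g_pos ha hm x).le, h1]

theorem tendsto_s0 (ha : 0 < a) (hm : 0 < m) :
    Tendsto (sq' a m) atTop (nhds 0) := by
  have := (tendsto_sE ha hm).mul (tendsto_EE ha)
  simpa [div_mul_cancel₀, (EE_pos (a := a) _).ne'] using this

theorem tendsto_qE (ha : 0 < a) (hm : 0 < m) :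
    Tendsto (fun x => qq a m x / eps a x) atTop (nhds (1 / (1 + a))) := by
  have := (tendsto_phpow ha (-m - 1)).div_const (1 + a)
  refine this.congr fun x => ?_
  have h2 : eps a x ≠ 0 := (eps_pos x).ne'
  have hb : (1:ℝ) + a ≠ 0 := by linarith
  simp only [qq, ph_sub_one]
  field_simp

theorem tendsto_qdE (ha : 0 < a) (hm : 0 < m) :
    Tendsto (fun x => qd a m x / eps a x) atTop (nhds (-(Real.sqrt a) / (1 + a))) := by
  have hfac : Tendsto (fun x => ph a x ^ (-m - 1)
      - (m + 1) * (ph a x - 1) * ph a x ^ (-m - 2)) atTop (nhds 1) := by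
    have h1 := tendsto_phpow ha (-m - 1)
    have h2 : Tendsto (fun x => (m + 1) * (ph a x - 1) * ph a x ^ (-m - 2))
        atTop (nhds ((m + 1) * (1 - 1) * 1)) :=
      (((tendsto_ph ha).sub_const 1).const_mul (m + 1)).mul (tendsto_phpow ha (-m - 2))
    simpa using h1.sub h2
  have := hfac.const_mul (-(Real.sqrt a) / (1 + a))
  rw [mul_one] at this
  refine this.congr fun x => ?_
  have h2 : eps a x ≠ 0 := (eps_pos x).ne'
  have hb : (1:ℝ) + a ≠ 0 := by linarith
  simp only [qd, ph_sub_one]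
  field_simp

theorem tendsto_sdE (ha : 0 < a) (hm : 0 < m) :
    Tendsto (fun x => sd a m x / EE a x) atTop
      (nhds ((-(m * Real.sqrt a) * (1 / (1 + a))) / (2 * Real.sqrt (m / (1 + a))))) := by
  have hC : 0 < Real.sqrt (m / (1 + a)) := Real.sqrt_pos.2 (by positivity)
  have := ((tendsto_qE ha hm).const_mul (-(m * Real.sqrt a))).div
    ((tendsto_sE ha hm).const_mul 2) (by positivity)
  refine this.congr fun x => ?_
  have h1 : sq' a m x ≠ 0 := (s_pos ha hm x).ne'
  have h2 : EE a x ≠ 0 := (EE_pos x).ne'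
  simp only [sd, eps_eq, Pi.div_apply]
  field_simp

theorem tendsto_sd0 (ha : 0 < a) (hm : 0 < m) :
    Tendsto (sd a m) atTop (nhds 0) := by
  have := (tendsto_sdE ha hm).mul (tendsto_EE ha)
  simpa [div_mul_cancel₀, (EE_pos (a := a) _).ne'] using this


variable (a m)
def Cc : ℝ := Real.sqrt (m / (1 + a))
def V1 : ℝ := (-(m * Real.sqrt a) * (1 / (1 + a))) / (2 * Cc a m)
def V2 : ℝ := ((-(m * Real.sqrt a) * (-(Real.sqrt a) / (1 + a))) * (2 * Cc a m)
    - (-(m * Real.sqrt a) * (1 / (1 + a))) * (2 * V1 a m)) / (2 * Cc a m) ^ 2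
variable {a m}

theorem Cc_pos (ha : 0 < a) (hm : 0 < m) : 0 < Cc a m :=
  Real.sqrt_pos.2 (by positivity)

theorem tendsto_sddE (ha : 0 < a) (hm : 0 < m) :
    Tendsto (fun x => sdd a m x / EE a x) atTop (nhds (V2 a m)) := by
  have hC := Cc_pos ha hm
  have hnum : Tendsto (fun x => (-(m * Real.sqrt a) * (qd a m x / eps a x))
        * (2 * (sq' a m x / EE a x))
      - (-(m * Real.sqrt a) * (qq a m x / eps a x)) * (2 * (sd a m x / EE a x)))
      atTop (nhds ((-(m * Real.sqrt a) * (-(Real.sqrt a) / (1 + a))) * (2 * Cc a m)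
      - (-(m * Real.sqrt a) * (1 / (1 + a))) * (2 * V1 a m))) :=
    (((tendsto_qdE ha hm).const_mul _).mul ((tendsto_sE ha hm).const_mul 2)).sub
      (((tendsto_qE ha hm).const_mul _).mul ((tendsto_sdE ha hm).const_mul 2))
  have hden : Tendsto (fun x => (2 * (sq' a m x / EE a x)) ^ 2) atTop
      (nhds ((2 * Cc a m) ^ 2)) := ((tendsto_sE ha hm).const_mul 2).pow 2
  have := hnum.div hden (by positivity)
  refine this.congr fun x => ?_
  have h1 : sq' a m x ≠ 0 := (s_pos ha hm x).ne'
  have h2 : EE a x ≠ 0 := (EE_pos x).ne'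
  simp only [sdd, eps_eq, Pi.div_apply]
  field_simp

theorem tendsto_d1E (ha : 0 < a) (hm : 0 < m) :
    Tendsto (fun x => d1 a m x / EE a x) atTop
      (nhds ((Real.sqrt a * (-(V1 a m))) / ((1 + 0) ^ 2))) := by
  have := (((tendsto_sdE ha hm).neg.const_mul (Real.sqrt a)).div
    (((tendsto_s0 ha hm).const_add 1).pow 2) (by norm_num))
  refine this.congr fun x => ?_
  have h1 : (0:ℝ) < 1 + sq' a m x := by have := s_pos ha hm x; linarith
  have h2 : EE a x ≠ 0 := (EE_pos x).ne'
  simp only [d1, Pi.div_apply]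
  field_simp

theorem tendsto_d2E (ha : 0 < a) (hm : 0 < m) :
    Tendsto (fun x => d2 a m x / EE a x) atTop
      (nhds (((Real.sqrt a * (-(V2 a m))) * ((1 + 0) ^ 2)
        - (Real.sqrt a * (-(0:ℝ))) * (2 * (1 + 0) ^ 1 * V1 a m)) / (((1 + 0) ^ 2) ^ 2))) := by
  have t1 : Tendsto (fun x => (Real.sqrt a * (-(sdd a m x / EE a x)))
      * ((1 + sq' a m x) ^ 2)) atTop
      (nhds ((Real.sqrt a * (-(V2 a m))) * ((1 + 0) ^ 2))) :=
    ((tendsto_sddE ha hm).neg.const_mul _).mul (((tendsto_s0 ha hm).const_add 1).pow 2)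
  have t2 : Tendsto (fun x => (Real.sqrt a * (-(sd a m x)))
      * (2 * (1 + sq' a m x) ^ 1 * (sd a m x / EE a x))) atTop
      (nhds ((Real.sqrt a * (-(0:ℝ))) * (2 * (1 + 0) ^ 1 * V1 a m))) :=
    ((tendsto_sd0 ha hm).neg.const_mul _).mul
      ((((tendsto_s0 ha hm).const_add 1).pow 1).const_mul 2 |>.mul (tendsto_sdE ha hm))
  have hden : Tendsto (fun x => ((1 + sq' a m x) ^ 2) ^ 2) atTop
      (nhds (((1 + (0:ℝ)) ^ 2) ^ 2)) := (((tendsto_s0 ha hm).const_add 1).pow 2).pow 2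
  have := (t1.sub t2).div hden (by norm_num)
  refine this.congr fun x => ?_
  have h1 : (0:ℝ) < 1 + sq' a m x := by have := s_pos ha hm x; linarith
  have h2 : EE a x ≠ 0 := (EE_pos x).ne'
  simp only [d2, Pi.div_apply]
  field_simp

end ThAux


theorem val1_aux (a m C l : ℝ) (ha : 0 < a) (hm : 0 < m) (hC : 0 < C)
    (hC2 : C ^ 2 = m / (1 + a)) (hl2 : l ^ 2 = a) :
    l * (-((-(m * l) * (1 / (1 + a))) / (2 * C))) / ((1 + 0) ^ 2) = a / 2 * C := by
  have hb : (0:ℝ) < 1 + a := by linarith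
  have hmb : m = C ^ 2 * (1 + a) := by rw [hC2]; field_simp
  subst hmb
  field_simp
  linear_combination hl2

theorem val2_aux (a m C l W1 W2 : ℝ) (ha : 0 < a) (hm : 0 < m) (hC : 0 < C)
    (hC2 : C ^ 2 = m / (1 + a)) (hl2 : l ^ 2 = a)
    (hV1 : W1 = (-(m * l) * (1 / (1 + a))) / (2 * C))
    (hV2 : W2 = ((-(m * l) * (-l / (1 + a))) * (2 * C)
      - (-(m * l) * (1 / (1 + a))) * (2 * W1)) / (2 * C) ^ 2) :
    ((l * (-W2)) * ((1 + 0) ^ 2) - (l * (-(0:ℝ))) * (2 * (1 + 0) ^ 1 * W1)) / (((1 + 0) ^ 2) ^ 2)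
      = -(l * (a / 2 * C)) / 2 := by
  have hb : (0:ℝ) < 1 + a := by linarith
  have hmb : m = C ^ 2 * (1 + a) := by rw [hC2]; field_simp
  subst hmb hV1 hV2
  field_simp
  linear_combination (-l) * hl2

/-- derivative bounds on `θ₁` for the critical speed `c = 2√a`. -/
theorem theta1_derivative_bounds_critical
    (a m c : ℝ) (ha : 0 < a) (hm : 0 < m) (hc : c = 2 * Real.sqrt a)
    (lam : ℝ) (hlam : lam = (c - Real.sqrt (c ^ 2 - 4 * a)) / 2)
    (φ θ₁ : ℝ → ℝ)
    (hφ : ∀ x, φ x = 1 + Real.exp (-lam * x) / (1 + a))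
    (hθ₁ : ∀ x, θ₁ x = (c - Real.sqrt (c ^ 2 - 4 * a * (φ x) ^ (-m)))
        / (2 * (φ x) ^ (-m)))
    (K₁ : ℝ) (hK₁ : K₁ = (a / 2) * Real.sqrt (m / (1 + a))) :
    ∃ x₀ : ℝ, ∀ x > x₀,
      (0 < deriv θ₁ x ∧ deriv θ₁ x ≤ 2 * K₁ * Real.exp (-(lam / 2) * x)) ∧
      (-(lam * K₁) * Real.exp (-(lam / 2) * x) ≤ deriv (deriv θ₁) x ∧
        deriv (deriv θ₁) x < 0) := by
  have hb : (0:ℝ) < 1 + a := by linarith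
  have hl : 0 < Real.sqrt a := Real.sqrt_pos.2 ha
  have hl2 : Real.sqrt a ^ 2 = a := Real.sq_sqrt ha.le
  have hlam' : lam = Real.sqrt a := by
    rw [hlam, hc]
    have h4 : (2 * Real.sqrt a) ^ 2 - 4 * a = 0 := by rw [mul_pow, hl2]; ring
    rw [h4, Real.sqrt_zero]; ring
  have hC : 0 < Cc a m := Cc_pos ha hm
  have hC2 : Cc a m ^ 2 = m / (1 + a) := Real.sq_sqrt (by positivity)
  have hK : K₁ = a / 2 * Cc a m := by rw [hK₁, Cc]
  have hKpos : 0 < K₁ := by rw [hK]; positivity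
  have hphi : φ = ph a := by
    funext x; rw [hφ x, hlam', ph]
  have hth : θ₁ = th a m := by
    funext x
    have hs := s_pos ha hm x
    have hsq := s_sq ha hm x
    have hu : (0:ℝ) < ph a x ^ (-m) := u_pos ha x
    rw [hθ₁ x, hphi, hc]
    have h4 : (2 * Real.sqrt a) ^ 2 - 4 * a * ph a x ^ (-m)
        = (2 * Real.sqrt a * sq' a m x) ^ 2 := by
      rw [mul_pow, mul_pow, hsq]
      linear_combination (4 * ph a x ^ (-m)) * hl2
    rw [h4, Real.sqrt_sq (by positivity), th]
    have h1s : (1 + sq' a m x) ≠ 0 := by positivity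
    field_simp
    linear_combination (-1) * hsq
  have hd1 : deriv θ₁ = d1 a m := by
    rw [hth]; funext y; exact (hasDerivAt_th ha hm y).deriv
  have hd2 : ∀ y, deriv (deriv θ₁) y = d2 a m y := by
    intro y; rw [hd1]; exact (hasDerivAt_d1 ha hm y).deriv
  have hL1 : Tendsto (fun x => d1 a m x / EE a x) atTop (nhds K₁) := by
    have hval : Real.sqrt a * (-(V1 a m)) / ((1 + 0:ℝ) ^ 2) = K₁ := by
      rw [hK]
      simp only [V1]
      exact val1_aux a m (Cc a m) (Real.sqrt a) ha hm hC hC2 hl2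
    have := tendsto_d1E ha hm
    rwa [hval] at this
  have hL2 : Tendsto (fun x => d2 a m x / EE a x) atTop
      (nhds (-(Real.sqrt a * K₁) / 2)) := by
    have hval : ((Real.sqrt a * (-(V2 a m))) * ((1 + 0:ℝ) ^ 2)
        - (Real.sqrt a * (-(0:ℝ))) * (2 * (1 + 0:ℝ) ^ 1 * V1 a m)) / (((1 + 0:ℝ) ^ 2) ^ 2)
        = -(Real.sqrt a * K₁) / 2 := by
      rw [hK]
      exact val2_aux a m (Cc a m) (Real.sqrt a) (V1 a m) (V2 a m) ha hm hC hC2 hl2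
        (by simp only [V1]) (by simp only [V2, V1])
    have := tendsto_d2E ha hm
    rwa [hval] at this
  have hmem1 : Set.Ioo (0:ℝ) (2 * K₁) ∈ nhds K₁ := Ioo_mem_nhds hKpos (by linarith)
  have hmem2 : Set.Ioo (-(Real.sqrt a * K₁)) (0:ℝ) ∈ nhds (-(Real.sqrt a * K₁) / 2) := by
    have hpos : 0 < Real.sqrt a * K₁ := by positivity
    exact Ioo_mem_nhds (by linarith) (by linarith)
  have e1 := hL1.eventually_mem hmem1
  have e2 := hL2.eventually_mem hmem2
  obtain ⟨x₀, hx₀⟩ := (eventually_atTop).mp (e1.and e2)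
  refine ⟨x₀, fun x hx => ?_⟩
  obtain ⟨h1, h2⟩ := hx₀ x hx.le
  have hE : 0 < EE a x := EE_pos x
  have hEeq : Real.exp (-(lam / 2) * x) = EE a x := by rw [hlam', EE]
  rw [Set.mem_Ioo] at h1 h2
  have hda : deriv θ₁ x = d1 a m x := by rw [hd1]
  have hdb := hd2 x
  refine ⟨⟨?_, ?_⟩, ?_, ?_⟩
  · rw [hda]
    have := mul_pos h1.1 hE
    rwa [div_mul_cancel₀ _ hE.ne'] at this
  · rw [hda, hEeq]
    have := (div_lt_iff₀ hE).mp h1.2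
    linarith
  · rw [hdb, hEeq, hlam']
    have := (lt_div_iff₀ hE).mp h2.1
    nlinarith [hE]
  · rw [hdb]
    have := (div_lt_iff₀ hE).mp h2.2
    nlinarith [hE]
end

section
/- Let a, m > 0 and c > 2√a, set λ = (c − √(c² − 4a))/2, φ(x) = 1 + e^{−λx}/(1+a), θ₁(x) = (c − √(c² − 4a·φ(x)^{−m}))/(2·φ(x)^{−m}) and K₂ = 4a²mλ / ((c + √(c² − 4a))²·√(c² − 4a)·(1+a)). Then there exists x₀ ∈ ℝ such that for all x > x₀: 0 < θ₁'(x) ≤ 2K₂·e^{−λx} and −2λK₂·e^{−λx} ≤ θ₁''(x) < 0. -/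
open Real Filter

set_option maxHeartbeats 1000000 in
/-- derivative bounds on `θ₁` for supercritical speed `c > 2√a`. -/
theorem theta1_derivative_bounds_supercritical
    (a m c : ℝ) (ha : 0 < a) (hm : 0 < m) (hc : 2 * Real.sqrt a < c)
    (lam : ℝ) (hlam : lam = (c - Real.sqrt (c ^ 2 - 4 * a)) / 2)
    (φ θ₁ : ℝ → ℝ)
    (hφ : ∀ x, φ x = 1 + Real.exp (-lam * x) / (1 + a))
    (hθ₁ : ∀ x, θ₁ x = (c - Real.sqrt (c ^ 2 - 4 * a * (φ x) ^ (-m)))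
        / (2 * (φ x) ^ (-m)))
    (K₂ : ℝ) (hK₂ : K₂ = 4 * a ^ 2 * m * lam
        / ((c + Real.sqrt (c ^ 2 - 4 * a)) ^ 2 * Real.sqrt (c ^ 2 - 4 * a) * (1 + a))) :
    ∃ x₀ : ℝ, ∀ x > x₀,
      (0 < deriv θ₁ x ∧ deriv θ₁ x ≤ 2 * K₂ * Real.exp (-lam * x)) ∧
      (-(2 * lam * K₂) * Real.exp (-lam * x) ≤ deriv (deriv θ₁) x ∧
        deriv (deriv θ₁) x < 0) := by
  have ha1 : (0:ℝ) < 1 + a := by linarith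
  have hc0 : (0:ℝ) < c := lt_of_le_of_lt (by positivity) hc
  have hca : 4 * a < c ^ 2 := by nlinarith [Real.sq_sqrt ha.le, Real.sqrt_nonneg a]
  set b := Real.sqrt (c ^ 2 - 4 * a) with hbdef
  have hbsq : b ^ 2 = c ^ 2 - 4 * a := Real.sq_sqrt (by linarith)
  have hb0 : 0 < b := Real.sqrt_pos.mpr (by linarith)
  have hbc : b < c := by nlinarith
  have hlam0 : 0 < lam := by rw [hlam]; linarith
  -- basic facts about φ
  have hφ1 : ∀ x, 1 < φ x := by
    intro x
    rw [hφ]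
    have h1 : 0 < Real.exp (-lam * x) / (1 + a) := by positivity
    linarith
  have hφ0 : ∀ x, 0 < φ x := fun x => lt_trans one_pos (hφ1 x)
  have hu0 : ∀ x, 0 < (φ x) ^ (-m) := fun x => Real.rpow_pos_of_pos (hφ0 x) _
  have hu1 : ∀ x, (φ x) ^ (-m) < 1 := fun x =>
    Real.rpow_lt_one_of_one_lt_of_neg (hφ1 x) (by linarith)
  have hy0 : ∀ x, 0 < c ^ 2 - 4 * a * (φ x) ^ (-m) := by
    intro x
    nlinarith [hu0 x, hu1 x]
  set s : ℝ → ℝ := fun x => Real.sqrt (c ^ 2 - 4 * a * (φ x) ^ (-m)) with hsdef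
  have hs0 : ∀ x, 0 < s x := fun x => Real.sqrt_pos.mpr (hy0 x)
  have hssq : ∀ x, s x ^ 2 = c ^ 2 - 4 * a * (φ x) ^ (-m) := fun x => Real.sq_sqrt (hy0 x).le
  have hcs : ∀ x, 0 < c + s x := fun x => by have := hs0 x; linarith
  -- θ₁ equals 2a/(c+s)
  have hθeq : ∀ x, θ₁ x = 2 * a * (c + s x)⁻¹ := by
    intro x
    rw [hθ₁]
    have h1 := hssq x
    have h2 := hs0 x
    have h3 := hu0 x
    have h4 := hcs x
    rw [show Real.sqrt (c ^ 2 - 4 * a * (φ x) ^ (-m)) = s x from rfl]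
    rw [eq_comm]
    field_simp
    nlinarith [h1]
  -- derivative chains
  have hlin : ∀ x : ℝ, HasDerivAt (fun y : ℝ => -lam * y) (-lam) x := by
    intro x
    simpa using (hasDerivAt_id x).const_mul (-lam)
  have hEd : ∀ x : ℝ, HasDerivAt (fun y : ℝ => Real.exp (-lam * y))
      (Real.exp (-lam * x) * -lam) x := fun x => (hlin x).exp
  have hφd : ∀ x, HasDerivAt φ (Real.exp (-lam * x) * -lam / (1 + a)) x := by
    intro x
    have h1 : HasDerivAt (fun y : ℝ => 1 + Real.exp (-lam * y) / (1 + a))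
        (Real.exp (-lam * x) * -lam / (1 + a)) x := ((hEd x).div_const (1 + a)).const_add 1
    have he : φ =ᶠ[nhds x] fun y : ℝ => 1 + Real.exp (-lam * y) / (1 + a) :=
      Filter.Eventually.of_forall hφ
    exact he.hasDerivAt_iff.mpr h1
  set ud : ℝ → ℝ := fun x =>
      Real.exp (-lam * x) * -lam / (1 + a) * -m * φ x ^ (-m - 1) with huddef
  have hud : ∀ x, HasDerivAt (fun y => φ y ^ (-m)) (ud x) x := fun x =>
    (hφd x).rpow_const (Or.inl (hφ0 x).ne')
  set sd : ℝ → ℝ := fun x => -(4 * a * ud x) / (2 * s x) with hsddef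
  have hsd : ∀ x, HasDerivAt s (sd x) x := by
    intro x
    have h1 : HasDerivAt (fun y => c ^ 2 - 4 * a * φ y ^ (-m)) (-(4 * a * ud x)) x :=
      ((hud x).const_mul (4 * a)).const_sub (c ^ 2)
    exact h1.sqrt (hy0 x).ne'
  set G : ℝ → ℝ := fun x =>
      4 * a ^ 2 * m * lam / (1 + a) * φ x ^ (-m - 1) / (s x * (c + s x) ^ 2) with hGdef
  set D : ℝ → ℝ := fun x => Real.exp (-lam * x) * G x with hDdef
  have hθD : ∀ x, HasDerivAt θ₁ (D x) x := by
    intro x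
    have h7 : HasDerivAt (fun y => c + s y) (sd x) x := (hsd x).const_add c
    have h8 : HasDerivAt (fun y => (c + s y)⁻¹) (-(sd x) / (c + s x) ^ 2) x :=
      h7.inv (hcs x).ne'
    have h9 : HasDerivAt (fun y => 2 * a * (c + s y)⁻¹)
        (2 * a * (-(sd x) / (c + s x) ^ 2)) x := h8.const_mul (2 * a)
    have he : θ₁ =ᶠ[nhds x] fun y => 2 * a * (c + s y)⁻¹ :=
      Filter.Eventually.of_forall hθeq
    have h10 := he.hasDerivAt_iff.mpr h9
    refine h10.congr_deriv ?_
    simp only [hDdef, hGdef, hsddef, huddef]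
    have h1 : s x ≠ 0 := (hs0 x).ne'
    have h2 : c + s x ≠ 0 := (hcs x).ne'
    have h3 : (1 : ℝ) + a ≠ 0 := ha1.ne'
    field_simp
  have hDeq : deriv θ₁ = D := funext fun x => (hθD x).deriv
  -- second derivative
  set qd : ℝ → ℝ := fun x => sd x * (c + s x) ^ 2 + s x * (2 * (c + s x) ^ 1 * sd x)
    with hqddef
  set Gd : ℝ → ℝ := fun x =>
      (4 * a ^ 2 * m * lam / (1 + a) * (Real.exp (-lam * x) * -lam / (1 + a) * (-m - 1) *
          φ x ^ (-m - 1 - 1)) * (s x * (c + s x) ^ 2)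
        - 4 * a ^ 2 * m * lam / (1 + a) * φ x ^ (-m - 1) * qd x)
        / (s x * (c + s x) ^ 2) ^ 2 with hGddef
  set H : ℝ → ℝ := fun x => Gd x - lam * G x with hHdef
  have hq0 : ∀ x, s x * (c + s x) ^ 2 ≠ 0 := by
    intro x
    have := hs0 x; have := hcs x
    positivity
  have hGd : ∀ x, HasDerivAt G (Gd x) x := by
    intro x
    have hP : HasDerivAt (fun y => φ y ^ (-m - 1))
        (Real.exp (-lam * x) * -lam / (1 + a) * (-m - 1) * φ x ^ (-m - 1 - 1)) x :=
      (hφd x).rpow_const (Or.inl (hφ0 x).ne')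
    have hq : HasDerivAt (fun y => s y * (c + s y) ^ 2) (qd x) x := by
      have h1 : HasDerivAt (fun y => (c + s y) ^ 2) (2 * (c + s x) ^ 1 * sd x) x := by
        simpa using ((hsd x).const_add c).fun_pow 2
      exact (hsd x).mul h1
    have h2 := (hP.const_mul (4 * a ^ 2 * m * lam / (1 + a))).fun_div hq (hq0 x)
    simpa [hGdef, hGddef] using h2
  have hD2 : ∀ x, HasDerivAt D (Real.exp (-lam * x) * H x) x := by
    intro x
    have h1 := (hEd x).mul (hGd x)
    have h2 : HasDerivAt D (Real.exp (-lam * x) * -lam * G x + Real.exp (-lam * x) * Gd x)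
        x := h1
    convert h2 using 1
    simp only [hHdef]
    ring
  have hD2deriv : ∀ x, deriv (deriv θ₁) x = Real.exp (-lam * x) * H x := by
    intro x
    rw [hDeq]
    exact (hD2 x).deriv
  -- limits
  have htE : Tendsto (fun x : ℝ => Real.exp (-lam * x)) atTop (nhds 0) := by
    have h1 : Tendsto (fun x : ℝ => lam * x) atTop atTop :=
      Tendsto.const_mul_atTop hlam0 tendsto_id
    have h2 : Tendsto (fun x : ℝ => -lam * x) atTop atBot := by
      have h3 := tendsto_neg_atTop_atBot.comp h1
      have h4 : ((fun x : ℝ => -x) ∘ fun x : ℝ => lam * x) = fun x : ℝ => -lam * x := by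
        funext x; simp [neg_mul]
      rwa [h4] at h3
    exact Real.tendsto_exp_atBot.comp h2
  have htφ : Tendsto φ atTop (nhds 1) := by
    have h1 : Tendsto (fun x : ℝ => 1 + Real.exp (-lam * x) / (1 + a)) atTop
        (nhds (1 + 0 / (1 + a))) := (htE.div_const (1 + a)).const_add 1
    simpa using h1.congr fun x => (hφ x).symm
  have htrpow : ∀ r : ℝ, Tendsto (fun x => φ x ^ r) atTop (nhds 1) := by
    intro r
    have h1 := htφ.rpow_const (p := r) (Or.inl one_ne_zero)
    simpa using h1
  have hts : Tendsto s atTop (nhds b) := by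
    have h1 : Tendsto (fun x => c ^ 2 - 4 * a * φ x ^ (-m)) atTop
        (nhds (c ^ 2 - 4 * a * 1)) := ((htrpow (-m)).const_mul (4 * a)).const_sub (c ^ 2)
    have h2 := h1.sqrt
    simpa [hbdef, hsdef] using h2
  have htφd : Tendsto (fun x => Real.exp (-lam * x) * -lam / (1 + a)) atTop (nhds 0) := by
    have h1 := (htE.mul_const (-lam)).div_const (1 + a)
    simpa using h1
  have htud : Tendsto ud atTop (nhds 0) := by
    have h1 := (htφd.mul_const (-m)).mul (htrpow (-m - 1))
    simpa [huddef] using h1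
  have htsd : Tendsto sd atTop (nhds 0) := by
    have h1 : Tendsto (fun x => -(4 * a * ud x)) atTop (nhds (-(4 * a * 0))) :=
      (htud.const_mul (4 * a)).neg
    have h2 : Tendsto (fun x => 2 * s x) atTop (nhds (2 * b)) := hts.const_mul 2
    have h3 := h1.div h2 (by positivity)
    simpa [hsddef, Pi.div_def] using h3
  have htq : Tendsto (fun x => s x * (c + s x) ^ 2) atTop (nhds (b * (c + b) ^ 2)) :=
    hts.mul ((hts.const_add c).pow 2)
  have hcb : 0 < c + b := by linarith
  have hQ0 : b * (c + b) ^ 2 ≠ 0 := by positivity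
  have hKval : 4 * a ^ 2 * m * lam / (1 + a) * 1 / (b * (c + b) ^ 2) = K₂ := by
    rw [hK₂]
    field_simp
  have htG : Tendsto G atTop (nhds K₂) := by
    have h1 := ((htrpow (-m - 1)).const_mul (4 * a ^ 2 * m * lam / (1 + a))).div htq hQ0
    rw [hKval] at h1
    exact h1
  have htqd : Tendsto qd atTop (nhds 0) := by
    have hinner : Tendsto (fun x => 2 * (c + s x) ^ 1 * sd x) atTop
        (nhds (2 * (c + b) ^ 1 * 0)) := (((hts.const_add c).pow 1).const_mul 2).mul htsd
    have h1 : Tendsto (fun x => sd x * (c + s x) ^ 2 + s x * (2 * (c + s x) ^ 1 * sd x))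
        atTop (nhds (0 * (c + b) ^ 2 + b * (2 * (c + b) ^ 1 * 0))) :=
      (htsd.mul ((hts.const_add c).pow 2)).add (hts.mul hinner)
    simpa [hqddef] using h1
  have htGd : Tendsto Gd atTop (nhds 0) := by
    have hnum : Tendsto (fun x =>
        4 * a ^ 2 * m * lam / (1 + a) * (Real.exp (-lam * x) * -lam / (1 + a) * (-m - 1) *
          φ x ^ (-m - 1 - 1)) * (s x * (c + s x) ^ 2)
        - 4 * a ^ 2 * m * lam / (1 + a) * φ x ^ (-m - 1) * qd x) atTop
        (nhds (4 * a ^ 2 * m * lam / (1 + a) * (0 * (-m - 1) * 1) * (b * (c + b) ^ 2)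
          - 4 * a ^ 2 * m * lam / (1 + a) * 1 * 0)) := by
      exact ((((htφd.mul_const (-m - 1)).mul (htrpow (-m - 1 - 1))).const_mul
          (4 * a ^ 2 * m * lam / (1 + a))).mul htq).sub
        (((htrpow (-m - 1)).const_mul (4 * a ^ 2 * m * lam / (1 + a))).mul htqd)
    have h2 := hnum.div (htq.pow 2) (pow_ne_zero 2 hQ0)
    simpa [hGddef, Pi.div_def] using h2
  have htH : Tendsto H atTop (nhds (-(lam * K₂))) := by
    have h1 := htGd.sub (htG.const_mul lam)
    simpa [hHdef] using h1
  -- eventual bounds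
  have hK2pos : 0 < K₂ := by
    rw [hK₂]
    positivity
  have e1 : ∀ᶠ x in atTop, 0 < G x := htG.eventually (eventually_gt_nhds hK2pos)
  have e2 : ∀ᶠ x in atTop, G x < 2 * K₂ := htG.eventually (eventually_lt_nhds (by linarith))
  have e3 : ∀ᶠ x in atTop, H x < 0 := htH.eventually (eventually_lt_nhds (by nlinarith))
  have e4 : ∀ᶠ x in atTop, -(2 * lam * K₂) < H x :=
    htH.eventually (eventually_gt_nhds (by nlinarith))
  obtain ⟨x₀, hx₀⟩ := Filter.eventually_atTop.mp (((e1.and e2).and (e3.and e4)))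
  refine ⟨x₀, fun x hx => ?_⟩
  obtain ⟨⟨hg1, hg2⟩, hh1, hh2⟩ := hx₀ x hx.le
  have hEpos : 0 < Real.exp (-lam * x) := Real.exp_pos _
  have hderx : deriv θ₁ x = Real.exp (-lam * x) * G x := by rw [hDeq]
  have hder2x : deriv (deriv θ₁) x = Real.exp (-lam * x) * H x := hD2deriv x
  refine ⟨⟨?_, ?_⟩, ?_, ?_⟩
  · rw [hderx]; exact mul_pos hEpos hg1
  · rw [hderx]; nlinarith
  · rw [hder2x]; nlinarith
  · rw [hder2x]; exact mul_neg_of_pos_of_neg hEpos hh1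
end

section
/- Let a > 0, c ≥ 2√a, λ = (c − √(c² − 4a))/2, and let η > 0 be a real number. Let u : ℝ → ℝ be continuous with 0 ≤ u(x) ≤ min{e^{−λx}, η} for all x ∈ ℝ, and define V(x;u) = (λ₂ − λ₁)^{−1}·(∫_{−∞}^x e^{λ₁(x−s)} u(s) ds + ∫_x^{+∞} e^{λ₂(x−s)} u(s) ds). Then V(·;u) is twice continuously differentiable, solves V'' + cV' + u − V = 0 on ℝ, and satisfies 0 ≤ V(x;u) ≤ min{e^{−λx}/(1+a), η} for all x ∈ ℝ; moreover if u(x) > 0 for all x then V(x;u) > 0 for all x. -/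
open Real Filter MeasureTheory Set Topology

lemma aux_integral_exp_neg_mul_Ioi {b : ℝ} (hb : 0 < b) (c : ℝ) :
    ∫ t in Set.Ioi c, Real.exp (-b * t) = Real.exp (-b * c) / b := by
  have hderiv : ∀ t ∈ Set.Ici c, HasDerivAt (fun t => -Real.exp (-b * t) / b)
      (Real.exp (-b * t)) t := by
    intro t _
    have h1 : HasDerivAt (fun t : ℝ => -b * t) (-b) t := by
      simpa using (hasDerivAt_id t).const_mul (-b)
    have h2 := (h1.exp.div_const b).neg
    rw [show Real.exp (-b * t) = -(Real.exp (-b * t) * -b / b) by field_simp]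
    simpa [neg_div, Pi.neg_def] using h2
  have htend : Tendsto (fun t => -Real.exp (-b * t) / b) atTop (𝓝 0) := by
    have h3 : Tendsto (fun t : ℝ => b * t) atTop atTop :=
      Tendsto.const_mul_atTop hb tendsto_id
    have h4 : Tendsto (fun t : ℝ => Real.exp (-(b * t))) atTop (𝓝 0) :=
      Real.tendsto_exp_neg_atTop_nhds_zero.comp h3
    have h5 := (h4.div_const b).neg
    simpa [neg_mul, neg_div] using h5
  have := integral_Ioi_of_hasDerivAt_of_tendsto' hderiv (exp_neg_integrableOn_Ioi c hb) htend
  rw [this]; ring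

lemma aux_integrableOn_exp_neg_mul_Ici {b : ℝ} (hb : 0 < b) (c : ℝ) :
    IntegrableOn (fun t => Real.exp (-b * t)) (Set.Ici c) := by
  rw [integrableOn_Ici_iff_integrableOn_Ioi]; exact exp_neg_integrableOn_Ioi c hb

lemma aux_integral_exp_neg_mul_Ici {b : ℝ} (hb : 0 < b) (c : ℝ) :
    ∫ t in Set.Ici c, Real.exp (-b * t) = Real.exp (-b * c) / b := by
  rw [MeasureTheory.integral_Ici_eq_integral_Ioi]; exact aux_integral_exp_neg_mul_Ioi hb c

lemma aux_integrableOn_exp_mul_Iic {b : ℝ} (hb : 0 < b) (c : ℝ) :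
    IntegrableOn (fun t => Real.exp (b * t)) (Set.Iic c) := by
  rw [← (Measure.measurePreserving_neg (volume : Measure ℝ)).integrableOn_comp_preimage
      (Homeomorph.neg ℝ).measurableEmbedding]
  simp only [Function.comp_def, neg_preimage, neg_Iic, mul_neg, ← neg_mul]
  exact aux_integrableOn_exp_neg_mul_Ici hb (-c)

lemma aux_integral_exp_mul_Iic {b : ℝ} (hb : 0 < b) (c : ℝ) :
    ∫ t in Set.Iic c, Real.exp (b * t) = Real.exp (b * c) / b := by
  have h := integral_comp_neg_Iic (c := c) (f := fun t => Real.exp (-b * t))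
  simp only [mul_neg, neg_mul, neg_neg] at h
  rw [h]
  have h2 := aux_integral_exp_neg_mul_Ioi hb (-c)
  simp only [neg_mul] at h2
  rw [h2, mul_neg, neg_neg]

lemma aux_integral_Ici_sub_Ici {f : ℝ → ℝ} {a b : ℝ} (ha : IntegrableOn f (Set.Ici a))
    (hb : IntegrableOn f (Set.Ici b)) :
    (∫ x in Set.Ici a, f x) - ∫ x in Set.Ici b, f x = ∫ x in a..b, f x := by
  wlog hab : a ≤ b generalizing a b
  · rw [intervalIntegral.integral_symm, ← this hb ha (le_of_not_ge hab), neg_sub]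
  rw [intervalIntegral.integral_of_le hab, sub_eq_iff_eq_add,
    MeasureTheory.integral_Ioc_eq_integral_Ioo, ← MeasureTheory.integral_Ico_eq_integral_Ioo,
    ← MeasureTheory.setIntegral_union ((Iio_disjoint_Ici le_rfl).mono_left Ico_subset_Iio_self)
      measurableSet_Ici (ha.mono_set Ico_subset_Ici_self) hb, Ico_union_Ici_eq_Ici hab]

lemma aux_hasDerivAt_integral_Iic (f : ℝ → ℝ) (hf : Continuous f)
    (hint : ∀ y, IntegrableOn f (Set.Iic y)) (x : ℝ) :
    HasDerivAt (fun y => ∫ s in Set.Iic y, f s) (f x) x := by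
  have key : ∀ y, ∫ s in Set.Iic y, f s = (∫ s in Set.Iic 0, f s) + ∫ s in (0:ℝ)..y, f s := by
    intro y
    rw [← intervalIntegral.integral_Iic_sub_Iic (hint 0) (hint y)]; ring
  have h2 : HasDerivAt (fun y => ∫ s in (0:ℝ)..y, f s) (f x) x :=
    intervalIntegral.integral_hasDerivAt_right (hf.intervalIntegrable 0 x)
      (hf.stronglyMeasurableAtFilter _ _) hf.continuousAt
  exact (h2.const_add (∫ s in Set.Iic 0, f s)).congr_of_eventuallyEq
    (Eventually.of_forall fun y => key y)

lemma aux_hasDerivAt_integral_Ici (f : ℝ → ℝ) (hf : Continuous f)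
    (hint : ∀ y, IntegrableOn f (Set.Ici y)) (x : ℝ) :
    HasDerivAt (fun y => ∫ s in Set.Ici y, f s) (-f x) x := by
  have key : ∀ y, ∫ s in Set.Ici y, f s = (∫ s in Set.Ici 0, f s) + -∫ s in (0:ℝ)..y, f s := by
    intro y
    rw [← aux_integral_Ici_sub_Ici (hint 0) (hint y)]; ring
  have h2 : HasDerivAt (fun y => ∫ s in (0:ℝ)..y, f s) (f x) x :=
    intervalIntegral.integral_hasDerivAt_right (hf.intervalIntegrable 0 x)
      (hf.stronglyMeasurableAtFilter _ _) hf.continuousAt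
  exact ((h2.neg).const_add (∫ s in Set.Ici 0, f s)).congr_of_eventuallyEq
    (Eventually.of_forall fun y => key y)

/-- the integral representation `V(·;u)` solves
`V'' + cV' + u − V = 0` and obeys the pointwise bounds of Lemma 3.2. -/
theorem V_solves_and_bounds
    (a c : ℝ) (ha : 0 < a) (hc : 2 * Real.sqrt a ≤ c)
    (lam lam₁ lam₂ : ℝ)
    (hlam : lam = (c - Real.sqrt (c ^ 2 - 4 * a)) / 2)
    (hlam₁ : lam₁ = (-c - Real.sqrt (c ^ 2 + 4)) / 2)
    (hlam₂ : lam₂ = (-c + Real.sqrt (c ^ 2 + 4)) / 2)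
    (η : ℝ) (hη : 0 < η)
    (u : ℝ → ℝ) (hu : Continuous u)
    (hubd : ∀ x, 0 ≤ u x ∧ u x ≤ min (Real.exp (-lam * x)) η)
    (V : ℝ → ℝ)
    (hV : ∀ x, V x = (lam₂ - lam₁)⁻¹ *
        ((∫ s in Set.Iic x, Real.exp (lam₁ * (x - s)) * u s) +
         (∫ s in Set.Ici x, Real.exp (lam₂ * (x - s)) * u s))) :
    ContDiff ℝ 2 V ∧
    (∀ x, deriv (deriv V) x + c * deriv V x + u x - V x = 0) ∧
    (∀ x, 0 ≤ V x ∧ V x ≤ min (Real.exp (-lam * x) / (1 + a)) η) ∧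
    ((∀ x, 0 < u x) → ∀ x, 0 < V x) := by
  have hu0 : ∀ x, 0 ≤ u x := fun x => (hubd x).1
  have huexp : ∀ x, u x ≤ Real.exp (-lam * x) := fun x => le_trans (hubd x).2 (min_le_left _ _)
  have huη : ∀ x, u x ≤ η := fun x => le_trans (hubd x).2 (min_le_right _ _)
  have hc0 : 0 ≤ c := le_trans (by positivity) hc
  have hs4 : Real.sqrt (c ^ 2 + 4) ^ 2 = c ^ 2 + 4 := Real.sq_sqrt (by positivity)
  have hs4pos : 0 < Real.sqrt (c ^ 2 + 4) := Real.sqrt_pos.2 (by positivity)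
  have hd : lam₂ - lam₁ = Real.sqrt (c ^ 2 + 4) := by rw [hlam₁, hlam₂]; ring
  have hl1neg : lam₁ < 0 := by rw [hlam₁]; linarith
  have hsc : c < Real.sqrt (c ^ 2 + 4) := by nlinarith
  have hl2pos : 0 < lam₂ := by rw [hlam₂]; linarith
  have hroot₁ : lam₁ ^ 2 + c * lam₁ - 1 = 0 := by rw [hlam₁]; linear_combination hs4 / 4
  have hroot₂ : lam₂ ^ 2 + c * lam₂ - 1 = 0 := by rw [hlam₂]; linear_combination hs4 / 4
  have hprod : lam₁ * lam₂ = -1 := by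
    rw [hlam₁, hlam₂]; linear_combination (-1/4 : ℝ) * hs4
  have hsum : lam₁ + lam₂ = -c := by rw [hlam₁, hlam₂]; ring
  have h4a : 0 ≤ c ^ 2 - 4 * a := by nlinarith [Real.sq_sqrt ha.le, Real.sqrt_nonneg a]
  have hra : Real.sqrt (c ^ 2 - 4 * a) ^ 2 = c ^ 2 - 4 * a := Real.sq_sqrt h4a
  have hr0 : 0 ≤ Real.sqrt (c ^ 2 - 4 * a) := Real.sqrt_nonneg _
  have hrc : Real.sqrt (c ^ 2 - 4 * a) ≤ c := by nlinarith
  have hl0 : 0 ≤ lam := by rw [hlam]; linarith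
  have hroot : lam ^ 2 - c * lam + a = 0 := by rw [hlam]; linear_combination hra / 4
  have hA : lam + lam₁ < 0 := by rw [hlam, hlam₁]; linarith
  have hB : 0 < lam + lam₂ := by linarith
  have hAB : (lam + lam₁) * (lam + lam₂) = -(1 + a) := by
    linear_combination hroot + hprod + lam * hsum
  set k : ℝ := (lam₂ - lam₁)⁻¹ with hkdef
  have hdne : lam₂ - lam₁ ≠ 0 := by rw [hd]; exact hs4pos.ne'
  have hkpos : 0 < k := by
    rw [hkdef]; exact inv_pos.2 (by rw [hd]; exact hs4pos)
  have hk1 : k * (lam₂ - lam₁) = 1 := inv_mul_cancel₀ hdne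
  have hcont₁ : Continuous fun s => Real.exp (-lam₁ * s) * u s :=
    ((Real.continuous_exp.comp (continuous_const.mul continuous_id)).mul hu)
  have hcont₂ : Continuous fun s => Real.exp (-lam₂ * s) * u s :=
    ((Real.continuous_exp.comp (continuous_const.mul continuous_id)).mul hu)
  have hint₁ : ∀ x, IntegrableOn (fun s => Real.exp (-lam₁ * s) * u s) (Set.Iic x) := by
    intro x
    apply Integrable.mono'
      ((aux_integrableOn_exp_mul_Iic (b := -lam₁) (by linarith) x).const_mul η)
      hcont₁.aestronglyMeasurable.restrict
    refine Eventually.of_forall fun s => ?_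
    rw [Real.norm_eq_abs, abs_of_nonneg (mul_nonneg (Real.exp_pos _).le (hu0 s))]
    calc Real.exp (-lam₁ * s) * u s ≤ Real.exp (-lam₁ * s) * η :=
          mul_le_mul_of_nonneg_left (huη s) (Real.exp_pos _).le
      _ = η * Real.exp (-lam₁ * s) := mul_comm _ _
  have hint₂ : ∀ x, IntegrableOn (fun s => Real.exp (-lam₂ * s) * u s) (Set.Ici x) := by
    intro x
    apply Integrable.mono'
      ((aux_integrableOn_exp_neg_mul_Ici (b := lam₂) hl2pos x).const_mul η)
      hcont₂.aestronglyMeasurable.restrict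
    refine Eventually.of_forall fun s => ?_
    rw [Real.norm_eq_abs, abs_of_nonneg (mul_nonneg (Real.exp_pos _).le (hu0 s))]
    calc Real.exp (-lam₂ * s) * u s ≤ Real.exp (-lam₂ * s) * η :=
          mul_le_mul_of_nonneg_left (huη s) (Real.exp_pos _).le
      _ = η * Real.exp (-lam₂ * s) := mul_comm _ _
  set I₁ : ℝ → ℝ := fun x => ∫ s in Set.Iic x, Real.exp (-lam₁ * s) * u s with hI₁def
  set I₂ : ℝ → ℝ := fun x => ∫ s in Set.Ici x, Real.exp (-lam₂ * s) * u s with hI₂def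
  have hDI₁ : ∀ x, HasDerivAt I₁ (Real.exp (-lam₁ * x) * u x) x := fun x =>
    aux_hasDerivAt_integral_Iic _ hcont₁ hint₁ x
  have hDI₂ : ∀ x, HasDerivAt I₂ (-(Real.exp (-lam₂ * x) * u x)) x := fun x =>
    aux_hasDerivAt_integral_Ici _ hcont₂ hint₂ x
  have hVW : ∀ x, V x = k * (Real.exp (lam₁ * x) * I₁ x + Real.exp (lam₂ * x) * I₂ x) := by
    intro x
    rw [hV x]
    congr 1
    have e₁ : (∫ s in Set.Iic x, Real.exp (lam₁ * (x - s)) * u s)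
        = Real.exp (lam₁ * x) * I₁ x := by
      simp only [hI₁def]
      rw [← MeasureTheory.integral_const_mul]
      refine integral_congr_ae (Eventually.of_forall fun s => ?_)
      show Real.exp (lam₁ * (x - s)) * u s = Real.exp (lam₁ * x) * (Real.exp (-lam₁ * s) * u s)
      rw [show lam₁ * (x - s) = lam₁ * x + -lam₁ * s by ring, Real.exp_add, mul_assoc]
    have e₂ : (∫ s in Set.Ici x, Real.exp (lam₂ * (x - s)) * u s)
        = Real.exp (lam₂ * x) * I₂ x := by
      simp only [hI₂def]
      rw [← MeasureTheory.integral_const_mul]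
      refine integral_congr_ae (Eventually.of_forall fun s => ?_)
      show Real.exp (lam₂ * (x - s)) * u s = Real.exp (lam₂ * x) * (Real.exp (-lam₂ * s) * u s)
      rw [show lam₂ * (x - s) = lam₂ * x + -lam₂ * s by ring, Real.exp_add, mul_assoc]
    rw [e₁, e₂]
  have hcancel₁ : ∀ x, Real.exp (lam₁ * x) * Real.exp (-lam₁ * x) = 1 := fun x => by
    rw [← Real.exp_add, show lam₁ * x + -lam₁ * x = 0 by ring, Real.exp_zero]
  have hcancel₂ : ∀ x, Real.exp (lam₂ * x) * Real.exp (-lam₂ * x) = 1 := fun x => by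
    rw [← Real.exp_add, show lam₂ * x + -lam₂ * x = 0 by ring, Real.exp_zero]
  have hF : ∀ x, HasDerivAt (fun y => Real.exp (lam₁ * y) * I₁ y)
      (lam₁ * (Real.exp (lam₁ * x) * I₁ x) + u x) x := by
    intro x
    have hE : HasDerivAt (fun y => Real.exp (lam₁ * y)) (lam₁ * Real.exp (lam₁ * x)) x := by
      have := ((hasDerivAt_id x).const_mul lam₁).exp
      simpa [mul_comm] using this
    have := hE.mul (hDI₁ x)
    refine this.congr_deriv ?_
    linear_combination (u x) * hcancel₁ x
  have hG : ∀ x, HasDerivAt (fun y => Real.exp (lam₂ * y) * I₂ y)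
      (lam₂ * (Real.exp (lam₂ * x) * I₂ x) - u x) x := by
    intro x
    have hE : HasDerivAt (fun y => Real.exp (lam₂ * y)) (lam₂ * Real.exp (lam₂ * x)) x := by
      have := ((hasDerivAt_id x).const_mul lam₂).exp
      simpa [mul_comm] using this
    have := hE.mul (hDI₂ x)
    refine this.congr_deriv ?_
    linear_combination (-(u x)) * hcancel₂ x
  set W₁ : ℝ → ℝ := fun x => k * (lam₁ * (Real.exp (lam₁ * x) * I₁ x)
      + lam₂ * (Real.exp (lam₂ * x) * I₂ x)) with hW₁def
  set W₂ : ℝ → ℝ := fun x => k * (lam₁ * (lam₁ * (Real.exp (lam₁ * x) * I₁ x) + u x)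
      + lam₂ * (lam₂ * (Real.exp (lam₂ * x) * I₂ x) - u x)) with hW₂def
  have hDV : ∀ x, HasDerivAt V (W₁ x) x := by
    intro x
    have hsum' := ((hF x).add (hG x)).const_mul k
    have h2 : HasDerivAt V (k * ((lam₁ * (Real.exp (lam₁ * x) * I₁ x) + u x)
        + (lam₂ * (Real.exp (lam₂ * x) * I₂ x) - u x))) x :=
      hsum'.congr_of_eventuallyEq (Eventually.of_forall fun y => hVW y)
    convert h2 using 1
    simp only [hW₁def]; ring
  have hDW₁ : ∀ x, HasDerivAt W₁ (W₂ x) x := by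
    intro x
    exact ((((hF x).const_mul lam₁).add ((hG x).const_mul lam₂)).const_mul k)
  have hderivV : deriv V = W₁ := funext fun x => (hDV x).deriv
  have hderivW₁ : deriv W₁ = W₂ := funext fun x => (hDW₁ x).deriv
  have hcI₁ : Continuous I₁ := continuous_iff_continuousAt.2 fun x => (hDI₁ x).continuousAt
  have hcI₂ : Continuous I₂ := continuous_iff_continuousAt.2 fun x => (hDI₂ x).continuousAt
  have hcE₁ : Continuous fun x => Real.exp (lam₁ * x) :=
    Real.continuous_exp.comp (continuous_const.mul continuous_id)
  have hcE₂ : Continuous fun x => Real.exp (lam₂ * x) :=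
    Real.continuous_exp.comp (continuous_const.mul continuous_id)
  have hcW₂ : Continuous W₂ := by
    rw [hW₂def]
    exact continuous_const.mul
      ((continuous_const.mul ((continuous_const.mul (hcE₁.mul hcI₁)).add hu)).add
       (continuous_const.mul ((continuous_const.mul (hcE₂.mul hcI₂)).sub hu)))
  refine ⟨?_, ?_, ?_, ?_⟩
  · -- ContDiff ℝ 2 V
    rw [show (2 : WithTop ℕ∞) = 1 + 1 by norm_num]
    refine contDiff_succ_iff_deriv.2 ⟨fun x => (hDV x).differentiableAt, by simp, ?_⟩
    rw [hderivV]
    exact contDiff_one_iff_deriv.2 ⟨fun x => (hDW₁ x).differentiableAt,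
      by rw [hderivW₁]; exact hcW₂⟩
  · -- ODE
    intro x
    rw [hderivV, hderivW₁, hVW x]
    simp only [hW₁def, hW₂def]
    linear_combination (k * (Real.exp (lam₁ * x) * I₁ x)) * hroot₁
      + (k * (Real.exp (lam₂ * x) * I₂ x)) * hroot₂ + (-(u x)) * hk1
  · -- bounds
    intro x
    have hI₁nn : 0 ≤ I₁ x := setIntegral_nonneg measurableSet_Iic
      fun s _ => mul_nonneg (Real.exp_pos _).le (hu0 s)
    have hI₂nn : 0 ≤ I₂ x := setIntegral_nonneg measurableSet_Ici
      fun s _ => mul_nonneg (Real.exp_pos _).le (hu0 s)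
    have hVnn : 0 ≤ V x := by
      rw [hVW x]
      exact mul_nonneg hkpos.le (add_nonneg (mul_nonneg (Real.exp_pos _).le hI₁nn)
        (mul_nonneg (Real.exp_pos _).le hI₂nn))
    have est₁η : I₁ x ≤ η * (Real.exp (-lam₁ * x) / -lam₁) := by
      have h1 : I₁ x ≤ ∫ s in Set.Iic x, η * Real.exp (-lam₁ * s) := by
        apply setIntegral_mono_on (hint₁ x)
          ((aux_integrableOn_exp_mul_Iic (b := -lam₁) (by linarith) x).const_mul η)
          measurableSet_Iic
        intro s _
        calc Real.exp (-lam₁ * s) * u s ≤ Real.exp (-lam₁ * s) * η :=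
              mul_le_mul_of_nonneg_left (huη s) (Real.exp_pos _).le
          _ = η * Real.exp (-lam₁ * s) := mul_comm _ _
      rw [MeasureTheory.integral_const_mul,
        aux_integral_exp_mul_Iic (b := -lam₁) (by linarith) x] at h1
      exact h1
    have est₂η : I₂ x ≤ η * (Real.exp (-lam₂ * x) / lam₂) := by
      have h1 : I₂ x ≤ ∫ s in Set.Ici x, η * Real.exp (-lam₂ * s) := by
        apply setIntegral_mono_on (hint₂ x)
          ((aux_integrableOn_exp_neg_mul_Ici (b := lam₂) hl2pos x).const_mul η)
          measurableSet_Ici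
        intro s _
        calc Real.exp (-lam₂ * s) * u s ≤ Real.exp (-lam₂ * s) * η :=
              mul_le_mul_of_nonneg_left (huη s) (Real.exp_pos _).le
          _ = η * Real.exp (-lam₂ * s) := mul_comm _ _
      rw [MeasureTheory.integral_const_mul,
        aux_integral_exp_neg_mul_Ici (b := lam₂) hl2pos x] at h1
      exact h1
    have est₁e : I₁ x ≤ Real.exp (-(lam + lam₁) * x) / (-(lam + lam₁)) := by
      have h1 : I₁ x ≤ ∫ s in Set.Iic x, Real.exp (-(lam + lam₁) * s) := by
        apply setIntegral_mono_on (hint₁ x)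
          (aux_integrableOn_exp_mul_Iic (b := -(lam + lam₁)) (by linarith) x)
          measurableSet_Iic
        intro s _
        calc Real.exp (-lam₁ * s) * u s ≤ Real.exp (-lam₁ * s) * Real.exp (-lam * s) :=
              mul_le_mul_of_nonneg_left (huexp s) (Real.exp_pos _).le
          _ = Real.exp (-(lam + lam₁) * s) := by
              rw [← Real.exp_add]; congr 1; ring
      rw [aux_integral_exp_mul_Iic (b := -(lam + lam₁)) (by linarith) x] at h1
      exact h1
    have est₂e : I₂ x ≤ Real.exp (-(lam + lam₂) * x) / (lam + lam₂) := by
      have h1 : I₂ x ≤ ∫ s in Set.Ici x, Real.exp (-(lam + lam₂) * s) := by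
        apply setIntegral_mono_on (hint₂ x)
          (aux_integrableOn_exp_neg_mul_Ici (b := lam + lam₂) hB x)
          measurableSet_Ici
        intro s _
        calc Real.exp (-lam₂ * s) * u s ≤ Real.exp (-lam₂ * s) * Real.exp (-lam * s) :=
              mul_le_mul_of_nonneg_left (huexp s) (Real.exp_pos _).le
          _ = Real.exp (-(lam + lam₂) * s) := by
              rw [← Real.exp_add]; congr 1; ring
      rw [aux_integral_exp_neg_mul_Ici (b := lam + lam₂) hB x] at h1
      exact h1
    refine ⟨hVnn, le_min ?_ ?_⟩
    · -- V x ≤ exp(-lam x)/(1+a)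
      have step : V x ≤ k * (Real.exp (lam₁ * x) * (Real.exp (-(lam + lam₁) * x) / (-(lam + lam₁)))
          + Real.exp (lam₂ * x) * (Real.exp (-(lam + lam₂) * x) / (lam + lam₂))) := by
        rw [hVW x]
        apply mul_le_mul_of_nonneg_left _ hkpos.le
        exact add_le_add (mul_le_mul_of_nonneg_left est₁e (Real.exp_pos _).le)
          (mul_le_mul_of_nonneg_left est₂e (Real.exp_pos _).le)
      refine le_trans step (le_of_eq ?_)
      have hc1 : Real.exp (lam₁ * x) * Real.exp (-(lam + lam₁) * x) = Real.exp (-lam * x) := by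
        rw [← Real.exp_add]; congr 1; ring
      have hc2 : Real.exp (lam₂ * x) * Real.exp (-(lam + lam₂) * x) = Real.exp (-lam * x) := by
        rw [← Real.exp_add]; congr 1; ring
      have h1apos : (0:ℝ) < 1 + a := by linarith
      have hS : (-(lam + lam₁)) * (lam + lam₂) = 1 + a := by linear_combination -hAB
      have e1' : ∀ X : ℝ, X / (-(lam + lam₁)) = X * (lam + lam₂) / (1 + a) := by
        intro X
        rw [div_eq_div_iff (neg_ne_zero.2 hA.ne) h1apos.ne']
        linear_combination (-X) * hS
      have e2' : ∀ X : ℝ, X / (lam + lam₂) = X * (-(lam + lam₁)) / (1 + a) := by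
        intro X
        rw [div_eq_div_iff hB.ne' h1apos.ne']
        linear_combination (-X) * hS
      calc k * (Real.exp (lam₁ * x) * (Real.exp (-(lam + lam₁) * x) / -(lam + lam₁))
            + Real.exp (lam₂ * x) * (Real.exp (-(lam + lam₂) * x) / (lam + lam₂)))
          = k * ((Real.exp (lam₁ * x) * Real.exp (-(lam + lam₁) * x)) / (-(lam + lam₁))
            + (Real.exp (lam₂ * x) * Real.exp (-(lam + lam₂) * x)) / (lam + lam₂)) := by
            ring
        _ = k * (Real.exp (-lam * x) / (-(lam + lam₁)) + Real.exp (-lam * x) / (lam + lam₂)) := by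
            rw [hc1, hc2]
        _ = k * (Real.exp (-lam * x) * (lam + lam₂) / (1 + a)
            + Real.exp (-lam * x) * (-(lam + lam₁)) / (1 + a)) := by
            rw [e1' (Real.exp (-lam * x)), e2' (Real.exp (-lam * x))]
        _ = (k * (lam₂ - lam₁)) * Real.exp (-lam * x) / (1 + a) := by ring
        _ = Real.exp (-lam * x) / (1 + a) := by rw [hk1]; ring
    · -- V x ≤ η
      have step : V x ≤ k * (Real.exp (lam₁ * x) * (η * (Real.exp (-lam₁ * x) / -lam₁))
          + Real.exp (lam₂ * x) * (η * (Real.exp (-lam₂ * x) / lam₂))) := by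
        rw [hVW x]
        apply mul_le_mul_of_nonneg_left _ hkpos.le
        exact add_le_add (mul_le_mul_of_nonneg_left est₁η (Real.exp_pos _).le)
          (mul_le_mul_of_nonneg_left est₂η (Real.exp_pos _).le)
      refine le_trans step (le_of_eq ?_)
      have hinvsum : 1 / (-lam₁) + 1 / lam₂ = lam₂ - lam₁ := by
        rw [div_add_div _ _ (neg_ne_zero.2 hl1neg.ne) hl2pos.ne',
          div_eq_iff (mul_ne_zero (neg_ne_zero.2 hl1neg.ne) hl2pos.ne')]
        linear_combination (lam₂ - lam₁) * hprod
      calc k * (Real.exp (lam₁ * x) * (η * (Real.exp (-lam₁ * x) / -lam₁))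
            + Real.exp (lam₂ * x) * (η * (Real.exp (-lam₂ * x) / lam₂)))
          = k * η * ((Real.exp (lam₁ * x) * Real.exp (-lam₁ * x)) * (1 / (-lam₁))
            + (Real.exp (lam₂ * x) * Real.exp (-lam₂ * x)) * (1 / lam₂)) := by ring
        _ = k * η * (1 / (-lam₁) + 1 / lam₂) := by rw [hcancel₁ x, hcancel₂ x]; ring
        _ = k * η * (lam₂ - lam₁) := by rw [hinvsum]
        _ = η := by linear_combination η * hk1
  · -- positivity
    intro hupos x
    have hI₂nn : 0 ≤ I₂ x := setIntegral_nonneg measurableSet_Ici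
      fun s _ => mul_nonneg (Real.exp_pos _).le (hu0 s)
    have hI₁pos : 0 < I₁ x := by
      rw [hI₁def]
      rw [setIntegral_pos_iff_support_of_nonneg_ae
        (ae_of_all _ fun s => mul_nonneg (Real.exp_pos _).le (hu0 s)) (hint₁ x)]
      have hsupp : Function.support (fun s => Real.exp (-lam₁ * s) * u s) = Set.univ := by
        ext s
        simp [Function.mem_support, (Real.exp_pos _).ne', (hupos s).ne']
      rw [hsupp, Set.univ_inter, Real.volume_Iic]
      simp
    rw [hVW x]
    exact mul_pos hkpos (add_pos_of_pos_of_nonneg (mul_pos (Real.exp_pos _) hI₁pos)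
      (mul_nonneg (Real.exp_pos _).le hI₂nn))
end

section
/- Let a > 0, c ≥ 2√a, λ = (c − √(c² − 4a))/2, and let η > 0 be a real number. Let u : ℝ → ℝ be continuous with 0 ≤ u(x) ≤ min{e^{−λx}, η} for all x ∈ ℝ, and define V(x;u) = (λ₂ − λ₁)^{−1}·(∫_{−∞}^x e^{λ₁(x−s)} u(s) ds + ∫_x^{+∞} e^{λ₂(x−s)} u(s) ds). Then V(·;u) is differentiable with V'(x;u) = (λ₂ − λ₁)^{−1}·(∫_{−∞}^x λ₁ e^{λ₁(x−s)} u(s) ds + ∫_x^{+∞} λ₂ e^{λ₂(x−s)} u(s) ds), and |V'(x;u)| ≤ min{η/√(1+a), e^{−λx}/√(1+a)} for all x ∈ ℝ. -/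
open Real Filter MeasureTheory Set intervalIntegral


lemma myIval_exp (k a b : ℝ) (hk : k ≠ 0) :
    ∫ s in a..b, Real.exp (k * s) = (Real.exp (k * b) - Real.exp (k * a)) / k := by
  rw [intervalIntegral.integral_comp_mul_left (fun t => Real.exp t) hk, integral_exp,
    smul_eq_mul]
  field_simp

lemma myInt_exp_Iic {k : ℝ} (hk : 0 < k) (x : ℝ) :
    IntegrableOn (fun s => Real.exp (k * s)) (Set.Iic x) := by
  have hcont : Continuous fun s : ℝ => Real.exp (k * s) :=
    Real.continuous_exp.comp (continuous_const.mul continuous_id)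
  refine integrableOn_Iic_of_intervalIntegral_norm_bounded (Real.exp (k*x)/k) x
    (fun y => hcont.integrableOn_Ioc) tendsto_id
    (Filter.Eventually.of_forall fun y => ?_)
  simp_rw [norm_of_nonneg (Real.exp_pos _).le, id_eq, myIval_exp k _ _ hk.ne']
  gcongr
  nlinarith [Real.exp_pos (k*y)]

lemma myVal_exp_Iic {k : ℝ} (hk : 0 < k) (x : ℝ) :
    ∫ s in Set.Iic x, Real.exp (k * s) = Real.exp (k * x) / k := by
  refine tendsto_nhds_unique
    (intervalIntegral_tendsto_integral_Iic _ (myInt_exp_Iic hk x) tendsto_id) ?_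
  simp_rw [id_eq, myIval_exp k _ _ hk.ne']
  have h2 : Tendsto (fun y : ℝ => Real.exp (k * y)) atBot (nhds 0) :=
    Real.tendsto_exp_atBot.comp (Tendsto.const_mul_atBot hk tendsto_id)
  have h3 := ((tendsto_const_nhds (x := Real.exp (k*x))).sub h2).div_const k
  simpa using h3

lemma myInt_exp_Ici {k : ℝ} (hk : 0 < k) (x : ℝ) :
    IntegrableOn (fun s => Real.exp (-(k * s))) (Set.Ici x) := by
  rw [integrableOn_Ici_iff_integrableOn_Ioi]
  simpa [neg_mul] using exp_neg_integrableOn_Ioi x hk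

lemma myVal_exp_Ici {k : ℝ} (hk : 0 < k) (x : ℝ) :
    ∫ s in Set.Ici x, Real.exp (-(k * s)) = Real.exp (-(k * x)) / k := by
  rw [MeasureTheory.integral_Ici_eq_integral_Ioi]
  have h := integral_comp_neg_Ioi x (fun t => Real.exp (k * t))
  simp_rw [show ∀ s : ℝ, -(k * s) = k * -s by intro s; ring]
  rw [h, myVal_exp_Iic hk (-x)]

lemma myHasDeriv_Iic (f : ℝ → ℝ) (hf : Continuous f)
    (hfi : ∀ x, IntegrableOn f (Set.Iic x)) (x : ℝ) :
    HasDerivAt (fun y => ∫ s in Set.Iic y, f s) (f x) x := by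
  have key : (fun y => ∫ s in Set.Iic y, f s)
      = fun y => (∫ s in Set.Iic x, f s) + ∫ s in x..y, f s := by
    funext y
    rw [← intervalIntegral.integral_Iic_sub_Iic (hfi x) (hfi y)]; ring
  rw [key]
  exact ((intervalIntegral.integral_hasDerivAt_right (hf.intervalIntegrable x x)
    (hf.stronglyMeasurableAtFilter volume (nhds x)) hf.continuousAt).const_add _)

lemma myHasDeriv_Ici (f : ℝ → ℝ) (hf : Continuous f)
    (hfi : ∀ x, IntegrableOn f (Set.Ici x)) (x : ℝ) :
    HasDerivAt (fun y => ∫ s in Set.Ici y, f s) (-(f x)) x := by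
  have key2 : ∀ a b : ℝ, a ≤ b →
      (∫ s in Set.Ici a, f s) - (∫ s in Set.Ici b, f s) = ∫ s in a..b, f s := by
    intro a b hab
    have hs : Set.Ici a = Set.Ico a b ∪ Set.Ici b := (Set.Ico_union_Ici_eq_Ici hab).symm
    rw [hs, MeasureTheory.setIntegral_union ((Set.Iio_disjoint_Ici le_rfl).mono_left Set.Ico_subset_Iio_self) measurableSet_Ici
      ((hfi a).mono_set Set.Ico_subset_Ici_self) (hfi b), intervalIntegral.integral_of_le hab,
      MeasureTheory.integral_Ico_eq_integral_Ioo, MeasureTheory.integral_Ioc_eq_integral_Ioo]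
    ring
  have key : (fun y => ∫ s in Set.Ici y, f s)
      = fun y => (∫ s in Set.Ici x, f s) - ∫ s in x..y, f s := by
    funext y
    rcases le_total x y with h | h
    · rw [← key2 x y h]; ring
    · rw [intervalIntegral.integral_symm, ← key2 y x h]; ring
  rw [key]
  exact ((intervalIntegral.integral_hasDerivAt_right (hf.intervalIntegrable x x)
    (hf.stronglyMeasurableAtFilter volume (nhds x)) hf.continuousAt).const_sub _)


set_option maxHeartbeats 2000000 in
/-- derivative formula and bound for the integral
representation `V(·;u)`. -/
theorem V_deriv_formula_and_bound
    (a c : ℝ) (ha : 0 < a) (hc : 2 * Real.sqrt a ≤ c)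
    (lam lam₁ lam₂ : ℝ)
    (hlam : lam = (c - Real.sqrt (c ^ 2 - 4 * a)) / 2)
    (hlam₁ : lam₁ = (-c - Real.sqrt (c ^ 2 + 4)) / 2)
    (hlam₂ : lam₂ = (-c + Real.sqrt (c ^ 2 + 4)) / 2)
    (η : ℝ) (hη : 0 < η)
    (u : ℝ → ℝ) (hu : Continuous u)
    (hubd : ∀ x, 0 ≤ u x ∧ u x ≤ min (Real.exp (-lam * x)) η)
    (V : ℝ → ℝ)
    (hV : ∀ x, V x = (lam₂ - lam₁)⁻¹ *
        ((∫ s in Set.Iic x, Real.exp (lam₁ * (x - s)) * u s) +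
         (∫ s in Set.Ici x, Real.exp (lam₂ * (x - s)) * u s))) :
    Differentiable ℝ V ∧
    (∀ x, deriv V x = (lam₂ - lam₁)⁻¹ *
        ((∫ s in Set.Iic x, lam₁ * Real.exp (lam₁ * (x - s)) * u s) +
         (∫ s in Set.Ici x, lam₂ * Real.exp (lam₂ * (x - s)) * u s))) ∧
    (∀ x, |deriv V x| ≤ min (η / Real.sqrt (1 + a))
        (Real.exp (-lam * x) / Real.sqrt (1 + a))) := by
  -- basic numeric facts
  have hsa : Real.sqrt a ^ 2 = a := Real.sq_sqrt ha.le
  have hsa0 : 0 ≤ Real.sqrt a := Real.sqrt_nonneg a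
  have hsaP : 0 < Real.sqrt a := Real.sqrt_pos.mpr ha
  have hc0 : 0 < c := lt_of_lt_of_le (by positivity) hc
  have hc2 : 4 * a ≤ c ^ 2 := by nlinarith
  have h4a : Real.sqrt (c ^ 2 - 4 * a) ^ 2 = c ^ 2 - 4 * a :=
    Real.sq_sqrt (by linarith)
  have h4a0 : 0 ≤ Real.sqrt (c ^ 2 - 4 * a) := Real.sqrt_nonneg _
  have hE : Real.sqrt (c ^ 2 + 4) ^ 2 = c ^ 2 + 4 := Real.sq_sqrt (by positivity)
  have hE0 : 0 ≤ Real.sqrt (c ^ 2 + 4) := Real.sqrt_nonneg _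
  have hDE : lam₂ - lam₁ = Real.sqrt (c ^ 2 + 4) := by rw [hlam₁, hlam₂]; ring
  have hD0 : 0 < lam₂ - lam₁ := by rw [hDE]; nlinarith
  have hcD : c ≤ lam₂ - lam₁ := by rw [hDE]; nlinarith
  have hlam0 : 0 < lam := by rw [hlam]; nlinarith
  have hlamc : 2 * lam ≤ c := by rw [hlam]; linarith
  have hlam2 : 0 < lam₂ := by rw [hlam₂]; nlinarith
  have hml1 : -(2 * lam₁) = c + (lam₂ - lam₁) := by rw [hDE, hlam₁]; ring
  have hk0 : 0 < -lam₁ := by linarith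
  have hk1 : 0 < -lam₁ - lam := by linarith
  have hk2 : 0 < lam₂ + lam := by linarith
  have hs1 : Real.sqrt (1 + a) ^ 2 = 1 + a := Real.sq_sqrt (by linarith)
  have hs0 : 0 < Real.sqrt (1 + a) := Real.sqrt_pos.mpr (by linarith)
  have h2s : 2 * Real.sqrt (1 + a) ≤ lam₂ - lam₁ := by rw [hDE]; nlinarith
  -- kernels
  have hcont₁ : Continuous fun s : ℝ => Real.exp (-lam₁ * s) * u s :=
    ((Real.continuous_exp.comp (continuous_const.mul continuous_id)).mul hu)
  have hcont₂ : Continuous fun s : ℝ => Real.exp (-lam₂ * s) * u s :=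
    ((Real.continuous_exp.comp (continuous_const.mul continuous_id)).mul hu)
  have huexp : ∀ s : ℝ, u s ≤ Real.exp (-lam * s) :=
    fun s => (hubd s).2.trans (min_le_left _ _)
  have huη : ∀ s : ℝ, u s ≤ η := fun s => (hubd s).2.trans (min_le_right _ _)
  have hint₁ : ∀ x, IntegrableOn (fun s : ℝ => Real.exp (-lam₁ * s) * u s) (Set.Iic x) := by
    intro x
    refine Integrable.mono' (myInt_exp_Iic hk1 x) hcont₁.aestronglyMeasurable.restrict ?_
    filter_upwards with s
    rw [Real.norm_eq_abs, abs_of_nonneg (mul_nonneg (Real.exp_pos _).le (hubd s).1)]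
    calc Real.exp (-lam₁ * s) * u s ≤ Real.exp (-lam₁ * s) * Real.exp (-lam * s) :=
          mul_le_mul_of_nonneg_left (huexp s) (Real.exp_pos _).le
      _ = Real.exp ((-lam₁ - lam) * s) := by rw [← Real.exp_add]; congr 1; ring
  have hint₂ : ∀ x, IntegrableOn (fun s : ℝ => Real.exp (-lam₂ * s) * u s) (Set.Ici x) := by
    intro x
    refine Integrable.mono' (myInt_exp_Ici hk2 x) hcont₂.aestronglyMeasurable.restrict ?_
    filter_upwards with s
    rw [Real.norm_eq_abs, abs_of_nonneg (mul_nonneg (Real.exp_pos _).le (hubd s).1)]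
    calc Real.exp (-lam₂ * s) * u s ≤ Real.exp (-lam₂ * s) * Real.exp (-lam * s) :=
          mul_le_mul_of_nonneg_left (huexp s) (Real.exp_pos _).le
      _ = Real.exp (-((lam₂ + lam) * s)) := by rw [← Real.exp_add]; congr 1; ring
  -- splitting of the kernels
  have hker₁ : ∀ x s : ℝ, Real.exp (lam₁ * (x - s)) * u s
      = Real.exp (lam₁ * x) * (Real.exp (-lam₁ * s) * u s) := by
    intro x s
    rw [← mul_assoc, ← Real.exp_add, show lam₁ * x + -lam₁ * s = lam₁ * (x - s) by ring]
  have hker₂ : ∀ x s : ℝ, Real.exp (lam₂ * (x - s)) * u s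
      = Real.exp (lam₂ * x) * (Real.exp (-lam₂ * s) * u s) := by
    intro x s
    rw [← mul_assoc, ← Real.exp_add, show lam₂ * x + -lam₂ * s = lam₂ * (x - s) by ring]
  have hsplit₁ : ∀ x : ℝ, (∫ s in Set.Iic x, Real.exp (lam₁ * (x - s)) * u s)
      = Real.exp (lam₁ * x) * ∫ s in Set.Iic x, Real.exp (-lam₁ * s) * u s := by
    intro x; simp_rw [hker₁ x]; rw [MeasureTheory.integral_const_mul]
  have hsplit₂ : ∀ x : ℝ, (∫ s in Set.Ici x, Real.exp (lam₂ * (x - s)) * u s)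
      = Real.exp (lam₂ * x) * ∫ s in Set.Ici x, Real.exp (-lam₂ * s) * u s := by
    intro x; simp_rw [hker₂ x]; rw [MeasureTheory.integral_const_mul]
  have hVeq : V = fun x => (lam₂ - lam₁)⁻¹ *
      (Real.exp (lam₁ * x) * (∫ s in Set.Iic x, Real.exp (-lam₁ * s) * u s) +
       Real.exp (lam₂ * x) * ∫ s in Set.Ici x, Real.exp (-lam₂ * s) * u s) := by
    funext x; rw [hV x, hsplit₁ x, hsplit₂ x]
  -- derivative
  have hVd : ∀ x : ℝ, HasDerivAt V ((lam₂ - lam₁)⁻¹ *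
      (lam₁ * (Real.exp (lam₁ * x) * ∫ s in Set.Iic x, Real.exp (-lam₁ * s) * u s) +
       lam₂ * (Real.exp (lam₂ * x) * ∫ s in Set.Ici x, Real.exp (-lam₂ * s) * u s))) x := by
    intro x
    rw [hVeq]
    have h1 : HasDerivAt (fun y => Real.exp (lam₁ * y)) (lam₁ * Real.exp (lam₁ * x)) x := by
      simpa [mul_comm] using ((hasDerivAt_id x).const_mul lam₁).exp
    have h3 : HasDerivAt (fun y => Real.exp (lam₂ * y)) (lam₂ * Real.exp (lam₂ * x)) x := by
      simpa [mul_comm] using ((hasDerivAt_id x).const_mul lam₂).exp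
    have h2 := myHasDeriv_Iic _ hcont₁ hint₁ x
    have h4 := myHasDeriv_Ici _ hcont₂ hint₂ x
    have h5 := ((h1.mul h2).add (h3.mul h4)).const_mul ((lam₂ - lam₁)⁻¹)
    refine h5.congr_deriv ?_
    have e1 : Real.exp (lam₁ * x) * Real.exp (-lam₁ * x) = 1 := by
      rw [← Real.exp_add]; simp
    have e2 : Real.exp (lam₂ * x) * Real.exp (-lam₂ * x) = 1 := by
      rw [← Real.exp_add]; simp
    linear_combination (lam₂ - lam₁)⁻¹ * u x * e1 - (lam₂ - lam₁)⁻¹ * u x * e2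
  refine ⟨fun x => (hVd x).differentiableAt, fun x => ?_, fun x => ?_⟩
  · rw [(hVd x).deriv]
    congr 1
    have t1 : (∫ s in Set.Iic x, lam₁ * Real.exp (lam₁ * (x - s)) * u s)
        = lam₁ * ∫ s in Set.Iic x, Real.exp (lam₁ * (x - s)) * u s := by
      simp_rw [mul_assoc]; rw [MeasureTheory.integral_const_mul]
    have t2 : (∫ s in Set.Ici x, lam₂ * Real.exp (lam₂ * (x - s)) * u s)
        = lam₂ * ∫ s in Set.Ici x, Real.exp (lam₂ * (x - s)) * u s := by
      simp_rw [mul_assoc]; rw [MeasureTheory.integral_const_mul]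
    rw [t1, t2, hsplit₁ x, hsplit₂ x]
  · -- the bound
    rw [(hVd x).deriv]
    -- abbreviations
    have hP0 : 0 ≤ ∫ s in Set.Iic x, Real.exp (-lam₁ * s) * u s :=
      MeasureTheory.setIntegral_nonneg measurableSet_Iic
        (fun s _ => mul_nonneg (Real.exp_pos _).le (hubd s).1)
    have hQ0 : 0 ≤ ∫ s in Set.Ici x, Real.exp (-lam₂ * s) * u s :=
      MeasureTheory.setIntegral_nonneg measurableSet_Ici
        (fun s _ => mul_nonneg (Real.exp_pos _).le (hubd s).1)
    -- integral comparisons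
    have hP1 : (∫ s in Set.Iic x, Real.exp (-lam₁ * s) * u s)
        ≤ η * (Real.exp (-lam₁ * x) / -lam₁) := by
      have hmono := MeasureTheory.integral_mono (hint₁ x)
        ((myInt_exp_Iic hk0 x).const_mul η)
        (fun s => by
          simpa [mul_comm] using mul_le_mul_of_nonneg_left (huη s) (Real.exp_pos (-lam₁ * s)).le)
      rwa [MeasureTheory.integral_const_mul, myVal_exp_Iic hk0 x] at hmono
    have hP2 : (∫ s in Set.Iic x, Real.exp (-lam₁ * s) * u s)
        ≤ Real.exp ((-lam₁ - lam) * x) / (-lam₁ - lam) := by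
      have hmono := MeasureTheory.integral_mono (hint₁ x) (myInt_exp_Iic hk1 x)
        (fun s => by
          calc Real.exp (-lam₁ * s) * u s ≤ Real.exp (-lam₁ * s) * Real.exp (-lam * s) :=
                mul_le_mul_of_nonneg_left (huexp s) (Real.exp_pos _).le
            _ = Real.exp ((-lam₁ - lam) * s) := by rw [← Real.exp_add]; congr 1; ring)
      rwa [myVal_exp_Iic hk1 x] at hmono
    have hQ1 : (∫ s in Set.Ici x, Real.exp (-lam₂ * s) * u s)
        ≤ η * (Real.exp (-(lam₂ * x)) / lam₂) := by
      have hmono := MeasureTheory.integral_mono (hint₂ x)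
        ((myInt_exp_Ici hlam2 x).const_mul η)
        (fun s => by
          have : Real.exp (-lam₂ * s) * u s ≤ Real.exp (-lam₂ * s) * η :=
            mul_le_mul_of_nonneg_left (huη s) (Real.exp_pos _).le
          simpa [neg_mul, mul_comm] using this)
      rwa [MeasureTheory.integral_const_mul, myVal_exp_Ici hlam2 x] at hmono
    have hQ2 : (∫ s in Set.Ici x, Real.exp (-lam₂ * s) * u s)
        ≤ Real.exp (-((lam₂ + lam) * x)) / (lam₂ + lam) := by
      have hmono := MeasureTheory.integral_mono (hint₂ x) (myInt_exp_Ici hk2 x)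
        (fun s => by
          calc Real.exp (-lam₂ * s) * u s ≤ Real.exp (-lam₂ * s) * Real.exp (-lam * s) :=
                mul_le_mul_of_nonneg_left (huexp s) (Real.exp_pos _).le
            _ = Real.exp (-((lam₂ + lam) * s)) := by rw [← Real.exp_add]; congr 1; ring)
      rwa [myVal_exp_Ici hk2 x] at hmono
    -- clean bounds
    have e1 : Real.exp (lam₁ * x) * Real.exp (-lam₁ * x) = 1 := by
      rw [← Real.exp_add]; simp
    have e2 : Real.exp (lam₂ * x) * Real.exp (-(lam₂ * x)) = 1 := by
      rw [← Real.exp_add]; simp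
    have e3 : Real.exp (lam₁ * x) * Real.exp ((-lam₁ - lam) * x) = Real.exp (-lam * x) := by
      rw [← Real.exp_add]; congr 1; ring
    have e4 : Real.exp (lam₂ * x) * Real.exp (-((lam₂ + lam) * x)) = Real.exp (-lam * x) := by
      rw [← Real.exp_add]; congr 1; ring
    have hE1 : (0:ℝ) < Real.exp (lam₁ * x) := Real.exp_pos _
    have hE2 : (0:ℝ) < Real.exp (lam₂ * x) := Real.exp_pos _
    have hF1 : (-lam₁) * (Real.exp (lam₁ * x) * ∫ s in Set.Iic x, Real.exp (-lam₁ * s) * u s)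
        ≤ η := by
      have h := mul_le_mul_of_nonneg_left hP1 hE1.le
      have h2 := mul_le_mul_of_nonneg_left h hk0.le
      calc (-lam₁) * (Real.exp (lam₁ * x) * ∫ s in Set.Iic x, Real.exp (-lam₁ * s) * u s)
          ≤ (-lam₁) * (Real.exp (lam₁ * x) * (η * (Real.exp (-lam₁ * x) / -lam₁))) := h2
        _ = η * (Real.exp (lam₁ * x) * Real.exp (-lam₁ * x)) := by
              have hl1ne : lam₁ ≠ 0 := ne_of_lt (by linarith)
              field_simp
        _ = η := by rw [e1]; ring
    have hF2 : (-lam₁ - lam) * (Real.exp (lam₁ * x) * ∫ s in Set.Iic x, Real.exp (-lam₁ * s) * u s)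
        ≤ Real.exp (-lam * x) := by
      have h := mul_le_mul_of_nonneg_left hP2 hE1.le
      have h2 := mul_le_mul_of_nonneg_left h hk1.le
      calc (-lam₁ - lam) * (Real.exp (lam₁ * x) * ∫ s in Set.Iic x, Real.exp (-lam₁ * s) * u s)
          ≤ (-lam₁ - lam) * (Real.exp (lam₁ * x) * (Real.exp ((-lam₁ - lam) * x) / (-lam₁ - lam))) := h2
        _ = Real.exp (lam₁ * x) * Real.exp ((-lam₁ - lam) * x) := by
              have : -lam₁ - lam ≠ 0 := ne_of_gt hk1
              field_simp
        _ = Real.exp (-lam * x) := e3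
    have hG1 : lam₂ * (Real.exp (lam₂ * x) * ∫ s in Set.Ici x, Real.exp (-lam₂ * s) * u s)
        ≤ η := by
      have h := mul_le_mul_of_nonneg_left hQ1 hE2.le
      have h2 := mul_le_mul_of_nonneg_left h hlam2.le
      calc lam₂ * (Real.exp (lam₂ * x) * ∫ s in Set.Ici x, Real.exp (-lam₂ * s) * u s)
          ≤ lam₂ * (Real.exp (lam₂ * x) * (η * (Real.exp (-(lam₂ * x)) / lam₂))) := h2
        _ = η * (Real.exp (lam₂ * x) * Real.exp (-(lam₂ * x))) := by
              have hl2ne : lam₂ ≠ 0 := ne_of_gt hlam2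
              field_simp
        _ = η := by rw [e2]; ring
    have hG2 : (lam₂ + lam) * (Real.exp (lam₂ * x) * ∫ s in Set.Ici x, Real.exp (-lam₂ * s) * u s)
        ≤ Real.exp (-lam * x) := by
      have h := mul_le_mul_of_nonneg_left hQ2 hE2.le
      have h2 := mul_le_mul_of_nonneg_left h hk2.le
      calc (lam₂ + lam) * (Real.exp (lam₂ * x) * ∫ s in Set.Ici x, Real.exp (-lam₂ * s) * u s)
          ≤ (lam₂ + lam) * (Real.exp (lam₂ * x) * (Real.exp (-((lam₂ + lam) * x)) / (lam₂ + lam))) := h2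
        _ = Real.exp (lam₂ * x) * Real.exp (-((lam₂ + lam) * x)) := by
              have : lam₂ + lam ≠ 0 := ne_of_gt hk2
              field_simp
        _ = Real.exp (-lam * x) := e4
    -- abbreviate
    set Fx := Real.exp (lam₁ * x) * ∫ s in Set.Iic x, Real.exp (-lam₁ * s) * u s with hFx
    set Gx := Real.exp (lam₂ * x) * ∫ s in Set.Ici x, Real.exp (-lam₂ * s) * u s with hGx
    have hF0 : 0 ≤ Fx := mul_nonneg hE1.le hP0
    have hG0 : 0 ≤ Gx := mul_nonneg hE2.le hQ0
    have hA0 : lam₁ * Fx ≤ 0 := mul_nonpos_of_nonpos_of_nonneg (by linarith) hF0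
    have hB0 : 0 ≤ lam₂ * Gx := mul_nonneg hlam2.le hG0
    have habs : |(lam₂ - lam₁)⁻¹ * (lam₁ * Fx + lam₂ * Gx)|
        ≤ (lam₂ - lam₁)⁻¹ * max (lam₂ * Gx) (-(lam₁ * Fx)) := by
      rw [abs_mul, abs_of_pos (inv_pos.mpr hD0)]
      refine mul_le_mul_of_nonneg_left ?_ (inv_pos.mpr hD0).le
      rw [abs_le]
      constructor
      · have := le_max_right (lam₂ * Gx) (-(lam₁ * Fx)); linarith
      · have := le_max_left (lam₂ * Gx) (-(lam₁ * Fx)); linarith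
    refine habs.trans (le_min ?_ ?_)
    · rw [inv_mul_le_iff₀ hD0]
      have hsD : Real.sqrt (1 + a) ≤ lam₂ - lam₁ := by linarith
      have htarget : η ≤ (lam₂ - lam₁) * (η / Real.sqrt (1 + a)) := by
        rw [← mul_div_assoc, le_div_iff₀ hs0]
        linarith [mul_le_mul_of_nonneg_right hsD hη.le]
      refine max_le (hG1.trans htarget) (?_)
      have : -(lam₁ * Fx) = (-lam₁) * Fx := by ring
      rw [this]
      exact hF1.trans htarget
    · rw [inv_mul_le_iff₀ hD0]
      have key3 : lam₂ * Real.sqrt (1 + a) ≤ (lam₂ - lam₁) * (lam₂ + lam) := by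
        linarith [mul_nonneg (sub_nonneg.mpr h2s) hlam2.le,
          mul_nonneg hs0.le hlam2.le, mul_nonneg hD0.le hlam0.le]
      have key4 : (-lam₁) * Real.sqrt (1 + a) ≤ (lam₂ - lam₁) * (-lam₁ - lam) := by
        have hint_a : (-(2 * lam₁)) * Real.sqrt (1 + a)
            = (c + (lam₂ - lam₁)) * Real.sqrt (1 + a) := by rw [hml1]
        have hint_b : (-(2 * lam₁)) * (lam₂ - lam₁)
            = (c + (lam₂ - lam₁)) * (lam₂ - lam₁) := by rw [hml1]
        linarith [mul_nonneg (sub_nonneg.mpr hcD) hs0.le,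
          mul_nonneg (sub_nonneg.mpr h2s) hD0.le,
          mul_nonneg (sub_nonneg.mpr hlamc) hD0.le, hint_a, hint_b]
      refine max_le ?_ ?_
      · rw [← mul_div_assoc, le_div_iff₀ hs0]
        linarith [mul_le_mul_of_nonneg_right key3 hG0,
          mul_le_mul_of_nonneg_left hG2 hD0.le]
      · rw [← mul_div_assoc, le_div_iff₀ hs0]
        have : -(lam₁ * Fx) = (-lam₁) * Fx := by ring
        rw [this]
        linarith [mul_le_mul_of_nonneg_right key4 hF0,
          mul_le_mul_of_nonneg_left hF2 hD0.le]
end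

section
/- Let a, m > 0 and c ≥ 2√a, set λ = (c − √(c² − 4a))/2, φ(x) = 1 + e^{−λx}/(1+a) and θ₁(x) = (c − √(c² − 4a·φ(x)^{−m}))/(2·φ(x)^{−m}). If V : ℝ → ℝ satisfies 0 ≤ V(x) ≤ e^{−λx}/(1+a) for all x ∈ ℝ, then for all x ∈ ℝ: (1 + V(x))^{−m}·θ₁(x)² − c·θ₁(x) + a ≥ 0. -/
open Real Filter

/-- `γ(V)θ₁² − cθ₁ + a ≥ 0` whenever `0 ≤ V(x) ≤ e^{−λx}/(1+a)`. -/
theorem gamma_theta1_quadratic_nonneg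
    (a m c : ℝ) (ha : 0 < a) (hm : 0 < m) (hc : 2 * Real.sqrt a ≤ c)
    (lam : ℝ) (hlam : lam = (c - Real.sqrt (c ^ 2 - 4 * a)) / 2)
    (φ θ₁ : ℝ → ℝ)
    (hφ : ∀ x, φ x = 1 + Real.exp (-lam * x) / (1 + a))
    (hθ₁ : ∀ x, θ₁ x = (c - Real.sqrt (c ^ 2 - 4 * a * (φ x) ^ (-m)))
        / (2 * (φ x) ^ (-m)))
    (V : ℝ → ℝ)
    (hV : ∀ x, 0 ≤ V x ∧ V x ≤ Real.exp (-lam * x) / (1 + a)) :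
    ∀ x, (1 + V x) ^ (-m) * (θ₁ x) ^ 2 - c * θ₁ x + a ≥ 0 := by
  intro x
  obtain ⟨hV0, hV1⟩ := hV x
  have hE : 0 < Real.exp (-lam * x) / (1 + a) := by positivity
  have hφ1 : 1 ≤ φ x := by rw [hφ x]; linarith
  have hφpos : 0 < φ x := lt_of_lt_of_le one_pos hφ1
  set g : ℝ := (φ x) ^ (-m) with hg
  have hgpos : 0 < g := Real.rpow_pos_of_pos hφpos _
  have hg1 : g ≤ 1 := Real.rpow_le_one_of_one_le_of_nonpos hφ1 (by linarith)
  -- c² ≥ 4a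
  have hc0 : 0 ≤ c := le_trans (by positivity) hc
  have hc2 : 4 * a ≤ c ^ 2 := by
    nlinarith [Real.sq_sqrt ha.le, Real.sqrt_nonneg a]
  have hdisc : 0 ≤ c ^ 2 - 4 * a * g := by nlinarith
  set s : ℝ := Real.sqrt (c ^ 2 - 4 * a * g) with hs
  have hs2 : s ^ 2 = c ^ 2 - 4 * a * g := Real.sq_sqrt hdisc
  have hθ : θ₁ x = (c - s) / (2 * g) := hθ₁ x
  -- identity
  have hid : g * (θ₁ x) ^ 2 - c * θ₁ x + a = 0 := by
    rw [hθ]; field_simp; nlinarith [hs2]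
  -- comparison
  have h1V : 1 + V x ≤ φ x := by rw [hφ x]; linarith
  have h1Vpos : (0:ℝ) < 1 + V x := by linarith
  have hmono : g ≤ (1 + V x) ^ (-m) :=
    Real.rpow_le_rpow_of_nonpos h1Vpos h1V (by linarith)
  nlinarith [sq_nonneg (θ₁ x), mul_le_mul_of_nonneg_right hmono (sq_nonneg (θ₁ x))]
end

section
/- Let a, m > 0 and c = 2√a, so λ = √a, set φ(x) = 1 + e^{−λx}/(1+a), θ₁(x) = (c − √(c² − 4a·φ(x)^{−m}))/(2·φ(x)^{−m}) and θ₂(x) = θ₁(x) + λ/4. Then there exists x₀ ∈ ℝ such that for every x > x₀ and every real number V with 0 ≤ V ≤ e^{−λx}/(1+a): (1 + V)^{−m}·θ₂(x)² − c·θ₂(x) + a ≥ a/64. -/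
open Real Filter Topology

/-- for `c = 2√a`, `γ(V)θ₂² − cθ₂ + a ≥ a/64` for large `x`. -/
theorem gamma_theta2_quadratic_lower_critical
    (a m c : ℝ) (ha : 0 < a) (hm : 0 < m) (hc : c = 2 * Real.sqrt a)
    (lam : ℝ) (hlam : lam = Real.sqrt a)
    (φ θ₁ θ₂ : ℝ → ℝ)
    (hφ : ∀ x, φ x = 1 + Real.exp (-lam * x) / (1 + a))
    (hθ₁ : ∀ x, θ₁ x = (c - Real.sqrt (c ^ 2 - 4 * a * (φ x) ^ (-m)))
        / (2 * (φ x) ^ (-m)))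
    (hθ₂ : ∀ x, θ₂ x = θ₁ x + lam / 4) :
    ∃ x₀ : ℝ, ∀ x > x₀, ∀ V : ℝ, 0 ≤ V → V ≤ Real.exp (-lam * x) / (1 + a) →
      (1 + V) ^ (-m) * (θ₂ x) ^ 2 - c * θ₂ x + a ≥ a / 64 := by
  have ha1 : (0:ℝ) < 1 + a := by linarith
  have hlam_pos : 0 < lam := by rw [hlam]; exact Real.sqrt_pos.mpr ha
  have hlam_sq : lam ^ 2 = a := by rw [hlam, sq_sqrt ha.le]
  have hca : c = 2 * lam := by rw [hc, hlam]
  -- exp(-lam x) → 0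
  have hexp : Tendsto (fun x : ℝ => Real.exp (-lam * x)) atTop (𝓝 0) := by
    rw [Real.tendsto_exp_comp_nhds_zero]
    have h1 : Tendsto (fun x : ℝ => lam * x) atTop atTop :=
      Tendsto.const_mul_atTop hlam_pos tendsto_id
    exact (tendsto_neg_atBot_iff.mpr h1).congr fun x => by ring
  have hφt : Tendsto φ atTop (𝓝 1) := by
    have := (hexp.div_const (1 + a)).const_add 1
    simp only [zero_div, add_zero] at this
    convert this using 1
    exact funext hφ
  set u : ℝ → ℝ := fun x => (φ x) ^ (-m) with hu
  have hut : Tendsto u atTop (𝓝 1) := by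
    have hcont := (Real.continuousAt_rpow_const 1 (-m) (Or.inl one_ne_zero)).tendsto
    have := hcont.comp hφt
    simpa [Real.one_rpow, Function.comp_def] using this
  have hc2 : c ^ 2 = 4 * a := by
    rw [hc]; rw [mul_pow, sq_sqrt ha.le]; ring
  have hst : Tendsto (fun x => Real.sqrt (c ^ 2 - 4 * a * u x)) atTop (𝓝 0) := by
    have hin : Tendsto (fun x => c ^ 2 - 4 * a * u x) atTop (𝓝 (c ^ 2 - 4 * a * 1)) :=
      tendsto_const_nhds.sub (hut.const_mul (4 * a))
    have : Tendsto (fun x => Real.sqrt (c ^ 2 - 4 * a * u x)) atTop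
        (𝓝 (Real.sqrt (c ^ 2 - 4 * a * 1))) := (Real.continuous_sqrt.tendsto _).comp hin
    simpa [hc2] using this
  have hθ₁t : Tendsto θ₁ atTop (𝓝 lam) := by
    have hnum : Tendsto (fun x => c - Real.sqrt (c ^ 2 - 4 * a * u x)) atTop (𝓝 c) := by
      simpa using tendsto_const_nhds.sub hst
    have hden : Tendsto (fun x => 2 * u x) atTop (𝓝 2) := by
      simpa using hut.const_mul 2
    have := hnum.div hden (by norm_num)
    have hclam : c / 2 = lam := by rw [hca]; ring
    rw [show (𝓝 lam) = 𝓝 (c / 2) by rw [hclam]]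
    convert this using 1
    exact funext hθ₁
  have hθ₂t : Tendsto θ₂ atTop (𝓝 (lam + lam / 4)) := by
    have := hθ₁t.add_const (lam / 4)
    convert this using 1
    exact funext hθ₂
  have hFt : Tendsto (fun x => u x * (θ₂ x) ^ 2 - c * θ₂ x + a) atTop (𝓝 (a / 16)) := by
    have h1 : Tendsto (fun x => u x * (θ₂ x) ^ 2 - c * θ₂ x + a) atTop
        (𝓝 (1 * (lam + lam / 4) ^ 2 - c * (lam + lam / 4) + a)) :=
      ((hut.mul (hθ₂t.pow 2)).sub (hθ₂t.const_mul c)).add_const a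
    have : 1 * (lam + lam / 4) ^ 2 - c * (lam + lam / 4) + a = a / 16 := by
      rw [hca]; nlinarith [hlam_sq]
    rwa [this] at h1
  have hev : ∀ᶠ x in atTop, a / 64 ≤ u x * (θ₂ x) ^ 2 - c * θ₂ x + a :=
    hFt.eventually_const_le (by linarith)
  obtain ⟨x₀, hx₀⟩ := eventually_atTop.mp hev
  refine ⟨x₀, fun x hx V hV0 hV1 => ?_⟩
  have hF := hx₀ x hx.le
  have hφpos : 0 < φ x := by rw [hφ]; positivity
  have h1V : (0:ℝ) < 1 + V := by linarith
  have hle : 1 + V ≤ φ x := by rw [hφ]; linarith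
  have hrp : u x ≤ (1 + V) ^ (-m) :=
    Real.rpow_le_rpow_of_nonpos h1V hle (by linarith)
  have hsq : 0 ≤ (θ₂ x) ^ 2 := sq_nonneg _
  nlinarith [mul_le_mul_of_nonneg_right hrp hsq]
end

section
/- Let a, m > 0 and c > 2√a, set λ = (c − √(c² − 4a))/2, φ(x) = 1 + e^{−λx}/(1+a), θ₁(x) = (c − √(c² − 4a·φ(x)^{−m}))/(2·φ(x)^{−m}), and fix k₀ > max{2λ/(c − 2λ), 2} and θ₂(x) = θ₁(x) + λ/k₀. Then there exists x₀ ∈ ℝ such that for every x > x₀ and every real number V ≥ 0: (1 + V)^{−m}·θ₂(x)² − c·θ₂(x) + a ≤ −λ(c − 2λ)/(4k₀). -/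
open Real Filter

set_option maxHeartbeats 1000000 in
/-- for `c > 2√a`, `γ(V)θ₂² − cθ₂ + a ≤ −λ(c−2λ)/(4k₀)` for large `x`. -/
theorem gamma_theta2_quadratic_upper_supercritical
    (a m c : ℝ) (ha : 0 < a) (hm : 0 < m) (hc : 2 * Real.sqrt a < c)
    (lam : ℝ) (hlam : lam = (c - Real.sqrt (c ^ 2 - 4 * a)) / 2)
    (φ θ₁ θ₂ : ℝ → ℝ)
    (hφ : ∀ x, φ x = 1 + Real.exp (-lam * x) / (1 + a))
    (hθ₁ : ∀ x, θ₁ x = (c - Real.sqrt (c ^ 2 - 4 * a * (φ x) ^ (-m)))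
        / (2 * (φ x) ^ (-m)))
    (k₀ : ℝ) (hk₀ : k₀ > max (2 * lam / (c - 2 * lam)) 2)
    (hθ₂ : ∀ x, θ₂ x = θ₁ x + lam / k₀) :
    ∃ x₀ : ℝ, ∀ x > x₀, ∀ V : ℝ, 0 ≤ V →
      (1 + V) ^ (-m) * (θ₂ x) ^ 2 - c * θ₂ x + a ≤ -(lam * (c - 2 * lam)) / (4 * k₀) := by
  have hsa : 0 < Real.sqrt a := Real.sqrt_pos.mpr ha
  have hc0 : 0 < c := by linarith
  have hdisc : 0 < c ^ 2 - 4 * a := by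
    nlinarith [Real.sq_sqrt ha.le, Real.sqrt_nonneg a]
  set s := Real.sqrt (c ^ 2 - 4 * a) with hs
  have hs_pos : 0 < s := Real.sqrt_pos.mpr hdisc
  have hs_sq : s ^ 2 = c ^ 2 - 4 * a := Real.sq_sqrt hdisc.le
  have hs_lt_c : s < c := by
    nlinarith [Real.sqrt_nonneg (c ^ 2 - 4 * a)]
  have hlam_pos : 0 < lam := by rw [hlam]; linarith
  have hcl : c - 2 * lam = s := by rw [hlam]; ring
  have hcl_pos : 0 < c - 2 * lam := by rw [hcl]; exact hs_pos
  have hq0 : lam ^ 2 - c * lam + a = 0 := by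
    rw [hlam]; nlinarith [hs_sq]
  have hk2 : (2 : ℝ) < k₀ := lt_of_le_of_lt (le_max_right _ _) hk₀
  have hk0 : 0 < k₀ := by linarith
  have hkl : 2 * lam < k₀ * (c - 2 * lam) := by
    have := lt_of_le_of_lt (le_max_left (2 * lam / (c - 2 * lam)) 2) hk₀
    calc 2 * lam = (2 * lam / (c - 2 * lam)) * (c - 2 * lam) := by
          field_simp
      _ < k₀ * (c - 2 * lam) := by
          exact mul_lt_mul_of_pos_right this hcl_pos
  -- limits
  have hφt : Tendsto φ atTop (nhds 1) := by
    have h1 : Tendsto (fun x : ℝ => lam * x) atTop atTop :=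
      tendsto_id.const_mul_atTop hlam_pos
    have h2 : Tendsto (fun x : ℝ => Real.exp (-lam * x)) atTop (nhds 0) :=
      (Real.tendsto_exp_atBot.comp (tendsto_neg_atTop_atBot.comp h1)).congr
        fun x => by simp [Function.comp, neg_mul]
    have h3 : Tendsto (fun x : ℝ => 1 + Real.exp (-lam * x) / (1 + a)) atTop (nhds (1 + 0 / (1 + a))) :=
      tendsto_const_nhds.add (h2.div_const _)
    have : (fun x : ℝ => 1 + Real.exp (-lam * x) / (1 + a)) = φ := by
      funext x; rw [hφ]
    rw [this] at h3
    simpa using h3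
  have hpt : Tendsto (fun x => (φ x) ^ (-m)) atTop (nhds 1) := by
    have := hφt.rpow_const (p := -m) (Or.inl one_ne_zero)
    simpa using this
  have hθ₁t : Tendsto θ₁ atTop (nhds lam) := by
    have h3 : Tendsto (fun x => c ^ 2 - 4 * a * (φ x) ^ (-m)) atTop (nhds (c ^ 2 - 4 * a)) := by
      have hsub := (tendsto_const_nhds (x := c ^ 2) (f := atTop)).sub (hpt.const_mul (4 * a))
      simpa [mul_assoc] using hsub
    have h4 : Tendsto (fun x => Real.sqrt (c ^ 2 - 4 * a * (φ x) ^ (-m))) atTop (nhds s) :=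
      (Real.continuous_sqrt.tendsto _).comp h3
    have h5 : Tendsto (fun x => (c - Real.sqrt (c ^ 2 - 4 * a * (φ x) ^ (-m))) / (2 * (φ x) ^ (-m)))
        atTop (nhds ((c - s) / (2 * 1))) :=
      (tendsto_const_nhds.sub h4).div (hpt.const_mul 2) (by norm_num)
    have heq : (fun x => (c - Real.sqrt (c ^ 2 - 4 * a * (φ x) ^ (-m))) / (2 * (φ x) ^ (-m))) = θ₁ := by
      funext x; rw [hθ₁]
    rw [heq] at h5
    have : (c - s) / (2 * 1) = lam := by rw [hlam]; ring
    rwa [this] at h5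
  have hθ₂t : Tendsto θ₂ atTop (nhds (lam + lam / k₀)) := by
    have := hθ₁t.add (tendsto_const_nhds (x := lam / k₀))
    have heq : (fun x => θ₁ x + lam / k₀) = θ₂ := by funext x; rw [hθ₂]
    rwa [heq] at this
  set L := lam + lam / k₀ with hL
  have hLpos : 0 < L := by positivity
  have he : lam / k₀ * k₀ = lam := div_mul_cancel₀ _ hk0.ne'
  have he2 : 2 * (lam / k₀) < c - 2 * lam := by
    have h : lam / k₀ < (c - 2 * lam) / 2 := by
      rw [div_lt_div_iff₀ hk0 two_pos]
      nlinarith [hkl]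
    linarith
  have hT : L ^ 2 - c * L + a < -(lam * (c - 2 * lam)) / (4 * k₀) := by
    have hepos : 0 < lam / k₀ := by positivity
    have key : L ^ 2 - c * L + a = (lam / k₀) ^ 2 - (lam / k₀) * (c - 2 * lam) := by
      rw [hL]; nlinarith [hq0]
    rw [key]
    have : -(lam * (c - 2 * lam)) / (4 * k₀) = -((lam / k₀) * (c - 2 * lam)) / 4 := by
      field_simp
    rw [this]
    nlinarith [hepos, he2, hcl_pos]
  have hqt : Tendsto (fun x => (θ₂ x) ^ 2 - c * θ₂ x + a) atTop
      (nhds (L ^ 2 - c * L + a)) :=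
    ((hθ₂t.pow 2).sub (hθ₂t.const_mul c)).add_const a
  have ev1 : ∀ᶠ x in atTop, (θ₂ x) ^ 2 - c * θ₂ x + a < -(lam * (c - 2 * lam)) / (4 * k₀) :=
    hqt.eventually_lt_const hT
  have ev2 : ∀ᶠ x in atTop, (0 : ℝ) < θ₂ x := hθ₂t.eventually_const_lt hLpos
  obtain ⟨x₀, hx₀⟩ := Filter.eventually_atTop.mp (ev1.and ev2)
  refine ⟨x₀, fun x hx V hV => ?_⟩
  obtain ⟨h1, h2⟩ := hx₀ x hx.le
  have hr : (1 + V) ^ (-m) ≤ 1 :=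
    Real.rpow_le_one_of_one_le_of_nonpos (by linarith) (by linarith)
  have hmul : (1 + V) ^ (-m) * (θ₂ x) ^ 2 ≤ (θ₂ x) ^ 2 :=
    mul_le_of_le_one_left (sq_nonneg _) hr
  linarith
end

section
/- Let a, m > 0 and c ≥ 2√a, set λ = (c − √(c² − 4a))/2, φ(x) = 1 + e^{−λx}/(1+a) and θ₁(x) = (c − √(c² − 4a·φ(x)^{−m}))/(2·φ(x)^{−m}). Then lim_{x→+∞} θ₁(x) = λ and 0 < θ₁(x) < λ ≤ √a for all x ∈ ℝ. -/
open Real Filter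

/-- `θ₁(x) → λ` as `x → +∞` and `0 < θ₁(x) < λ ≤ √a` on `ℝ`. -/
theorem theta1_limit_and_bounds
    (a m c : ℝ) (ha : 0 < a) (hm : 0 < m) (hc : 2 * Real.sqrt a ≤ c)
    (lam : ℝ) (hlam : lam = (c - Real.sqrt (c ^ 2 - 4 * a)) / 2)
    (φ θ₁ : ℝ → ℝ)
    (hφ : ∀ x, φ x = 1 + Real.exp (-lam * x) / (1 + a))
    (hθ₁ : ∀ x, θ₁ x = (c - Real.sqrt (c ^ 2 - 4 * a * (φ x) ^ (-m)))
        / (2 * (φ x) ^ (-m))) :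
    Tendsto θ₁ atTop (nhds lam) ∧
    (∀ x, 0 < θ₁ x ∧ θ₁ x < lam) ∧ lam ≤ Real.sqrt a := by
  have hsa : 0 < Real.sqrt a := Real.sqrt_pos.mpr ha
  have hsa2 : Real.sqrt a ^ 2 = a := Real.sq_sqrt ha.le
  have hc0 : 0 < c := lt_of_lt_of_le (by positivity) hc
  have hc2 : 0 ≤ c ^ 2 - 4 * a := by nlinarith
  set s := Real.sqrt (c ^ 2 - 4 * a) with hs
  have hs2 : s ^ 2 = c ^ 2 - 4 * a := Real.sq_sqrt hc2
  have hs0 : 0 ≤ s := Real.sqrt_nonneg _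
  have hsc : s < c := by nlinarith
  have hlam0 : 0 < lam := by rw [hlam]; linarith
  have hlamsa : lam ≤ Real.sqrt a := by
    rw [hlam]
    nlinarith [mul_nonneg hsa.le (sub_nonneg.mpr hc)]
  have hφ1 : ∀ x, 1 < φ x := by
    intro x
    rw [hφ]
    have h1 := Real.exp_pos (-lam * x)
    have : 0 < Real.exp (-lam * x) / (1 + a) := by positivity
    linarith
  -- pointwise bounds
  have hbounds : ∀ x, 0 < θ₁ x ∧ θ₁ x < lam := by
    intro x
    set b : ℝ := (φ x) ^ (-m) with hb
    have hb0 : 0 < b := Real.rpow_pos_of_pos (by linarith [hφ1 x]) _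
    have hb1 : b < 1 := Real.rpow_lt_one_of_one_lt_of_neg (hφ1 x) (by linarith)
    have harg : 0 ≤ c ^ 2 - 4 * a * b := by nlinarith
    set t : ℝ := Real.sqrt (c ^ 2 - 4 * a * b) with ht
    have ht2 : t ^ 2 = c ^ 2 - 4 * a * b := Real.sq_sqrt harg
    have ht0 : 0 ≤ t := Real.sqrt_nonneg _
    have htc : t < c := by nlinarith
    have hst : s < t := by
      rw [hs, ht]
      exact Real.sqrt_lt_sqrt hc2 (by nlinarith)
    have hθ : θ₁ x = 2 * a / (c + t) := by
      rw [hθ₁, ← hb, ← ht]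
      rw [div_eq_div_iff (by positivity) (by positivity)]
      nlinarith
    have hlam' : lam = 2 * a / (c + s) := by
      rw [hlam, div_eq_div_iff (by norm_num) (by positivity)]
      nlinarith
    constructor
    · rw [hθ]; positivity
    · rw [hθ, hlam']
      exact div_lt_div_of_pos_left (by positivity) (by positivity) (by linarith)
  refine ⟨?_, hbounds, hlamsa⟩
  -- limit
  have hexp : Tendsto (fun x => Real.exp (-lam * x)) atTop (nhds 0) := by
    apply Real.tendsto_exp_atBot.comp
    have h1 : Tendsto (fun x : ℝ => lam * x) atTop atTop :=
      Tendsto.const_mul_atTop hlam0 tendsto_id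
    have := tendsto_neg_atTop_atBot.comp h1
    exact this.congr fun x => by simp [Function.comp, neg_mul]
  have hφlim : Tendsto φ atTop (nhds 1) := by
    have : Tendsto (fun x => 1 + Real.exp (-lam * x) / (1 + a)) atTop
        (nhds (1 + 0 / (1 + a))) := (hexp.div_const (1 + a)).const_add 1
    simp only [zero_div, add_zero] at this
    exact this.congr fun x => (hφ x).symm
  have hblim : Tendsto (fun x => (φ x) ^ (-m)) atTop (nhds 1) := by
    have hcont : ContinuousAt (fun y : ℝ => y ^ (-m)) 1 :=
      Real.continuousAt_rpow_const 1 (-m) (Or.inl one_ne_zero)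
    have := hcont.tendsto.comp hφlim
    simpa [Function.comp_def, Real.one_rpow] using this
  have hg : ContinuousAt (fun y : ℝ => (c - Real.sqrt (c ^ 2 - 4 * a * y)) / (2 * y)) 1 := by
    apply ContinuousAt.div
    · fun_prop
    · fun_prop
    · norm_num
  have := hg.tendsto.comp hblim
  have hval : (c - Real.sqrt (c ^ 2 - 4 * a * 1)) / (2 * 1) = lam := by
    rw [hlam]; norm_num; exact hs.symm
  rw [hval] at this
  exact this.congr fun x => (hθ₁ x).symm
end

section
/- Let a, m > 0 and c ≥ 2√a, set λ = (c − √(c² − 4a))/2, φ(x) = 1 + e^{−λx}/(1+a), ρ(x) = √(c² − 4a·φ(x)^{−m}) and θ₁(x) = (c − ρ(x))/(2·φ(x)^{−m}). Then θ₁ is differentiable on ℝ with θ₁'(x) = 4a²mλ·e^{−λx} / (ρ(x)·(c + ρ(x))²·φ(x)^{m+1}·(1+a)) > 0 for every x ∈ ℝ; in particular θ₁ is strictly increasing. -/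
open Real Filter

/-- explicit positive derivative of `θ₁`; in particular `θ₁`
is strictly increasing. -/
theorem theta1_hasDerivAt_and_strictMono
    (a m c : ℝ) (ha : 0 < a) (hm : 0 < m) (hc : 2 * Real.sqrt a ≤ c)
    (lam : ℝ) (hlam : lam = (c - Real.sqrt (c ^ 2 - 4 * a)) / 2)
    (φ ρ θ₁ : ℝ → ℝ)
    (hφ : ∀ x, φ x = 1 + Real.exp (-lam * x) / (1 + a))
    (hρ : ∀ x, ρ x = Real.sqrt (c ^ 2 - 4 * a * (φ x) ^ (-m)))
    (hθ₁ : ∀ x, θ₁ x = (c - ρ x) / (2 * (φ x) ^ (-m))) :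
    (∀ x, HasDerivAt θ₁
        (4 * a ^ 2 * m * lam * Real.exp (-lam * x)
          / (ρ x * (c + ρ x) ^ 2 * (φ x) ^ (m + 1) * (1 + a))) x) ∧
    (∀ x, 0 < 4 * a ^ 2 * m * lam * Real.exp (-lam * x)
          / (ρ x * (c + ρ x) ^ 2 * (φ x) ^ (m + 1) * (1 + a))) ∧
    StrictMono θ₁ := by
  have hsa : 0 < Real.sqrt a := Real.sqrt_pos.mpr ha
  have hc0 : 0 < c := lt_of_lt_of_le (by positivity) hc
  have hc2 : 4 * a ≤ c ^ 2 := by nlinarith [Real.sq_sqrt ha.le]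
  have hlam_pos : 0 < lam := by
    have h1 : Real.sqrt (c ^ 2 - 4 * a) < c := by
      have : Real.sqrt (c ^ 2 - 4 * a) < Real.sqrt (c ^ 2) := by
        apply Real.sqrt_lt_sqrt (by linarith) (by linarith)
      rwa [Real.sqrt_sq hc0.le] at this
    rw [hlam]; linarith
  have ha1 : (0:ℝ) < 1 + a := by linarith
  have hφ1 : ∀ x, 1 < φ x := by
    intro x; rw [hφ x]
    have : 0 < Real.exp (-lam * x) / (1 + a) := by positivity
    linarith
  have hφpos : ∀ x, 0 < φ x := fun x => lt_trans one_pos (hφ1 x)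
  have hP1 : ∀ x, (φ x) ^ (-m) < 1 := by
    intro x
    rw [Real.rpow_neg (hφpos x).le]
    rw [inv_lt_one_iff₀]
    right
    exact Real.one_lt_rpow_iff_of_pos (hφpos x) |>.mpr (Or.inl ⟨hφ1 x, hm⟩)
  have hPpos : ∀ x, 0 < (φ x) ^ (-m) := fun x => Real.rpow_pos_of_pos (hφpos x) _
  have hIpos : ∀ x, 0 < c ^ 2 - 4 * a * (φ x) ^ (-m) := by
    intro x
    have := hP1 x
    nlinarith [hPpos x]
  have hρpos : ∀ x, 0 < ρ x := by
    intro x; rw [hρ x]; exact Real.sqrt_pos.mpr (hIpos x)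
  have hρsq : ∀ x, (ρ x) ^ 2 = c ^ 2 - 4 * a * (φ x) ^ (-m) := by
    intro x; rw [hρ x, Real.sq_sqrt (hIpos x).le]
  -- θ₁ = 2a/(c+ρ)
  have hθeq : ∀ x, θ₁ x = 2 * a / (c + ρ x) := by
    intro x
    rw [hθ₁ x, div_eq_div_iff (by have := hPpos x; positivity) (by have := hρpos x; positivity)]
    have := hρsq x
    nlinarith
  -- derivative
  have key : ∀ x, HasDerivAt θ₁
      (4 * a ^ 2 * m * lam * Real.exp (-lam * x)
        / (ρ x * (c + ρ x) ^ 2 * (φ x) ^ (m + 1) * (1 + a))) x := by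
    intro x
    have h1 : HasDerivAt (fun x : ℝ => -lam * x) (-lam) x := by
      simpa using (hasDerivAt_id x).const_mul (-lam)
    have hE : HasDerivAt (fun x : ℝ => Real.exp (-lam * x))
        (Real.exp (-lam * x) * (-lam)) x := h1.exp
    have hφ' : HasDerivAt φ (Real.exp (-lam * x) * (-lam) / (1 + a)) x := by
      have := (hE.div_const (1 + a)).const_add 1
      apply this.congr_of_eventuallyEq
      filter_upwards with y using (hφ y)
    have hP : HasDerivAt (fun y => (φ y) ^ (-m))
        ((Real.exp (-lam * x) * (-lam) / (1 + a)) * (-m) * (φ x) ^ (-m - 1)) x :=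
      hφ'.rpow_const (Or.inl (hφpos x).ne')
    have hI : HasDerivAt (fun y => c ^ 2 - 4 * a * (φ y) ^ (-m))
        (-(4 * a * ((Real.exp (-lam * x) * (-lam) / (1 + a)) * (-m) * (φ x) ^ (-m - 1)))) x :=
      (hP.const_mul (4 * a)).const_sub (c ^ 2)
    have hρ' : HasDerivAt ρ
        ((-(4 * a * ((Real.exp (-lam * x) * (-lam) / (1 + a)) * (-m) * (φ x) ^ (-m - 1))))
          / (2 * Real.sqrt (c ^ 2 - 4 * a * (φ x) ^ (-m)))) x := by
      have := hI.sqrt (hIpos x).ne'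
      apply this.congr_of_eventuallyEq
      filter_upwards with y using (hρ y)
    set ρ' := (-(4 * a * ((Real.exp (-lam * x) * (-lam) / (1 + a)) * (-m) * (φ x) ^ (-m - 1))))
          / (2 * Real.sqrt (c ^ 2 - 4 * a * (φ x) ^ (-m))) with hρ'def
    have hden : HasDerivAt (fun y => c + ρ y) ρ' x := hρ'.const_add c
    have hne : c + ρ x ≠ 0 := by have := hρpos x; positivity
    have hθd : HasDerivAt θ₁ (2 * a * (-ρ' / (c + ρ x) ^ 2)) x := by
      have := (hden.inv hne).const_mul (2 * a)
      have h2 : HasDerivAt (fun y => 2 * a * (c + ρ y)⁻¹)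
          (2 * a * (-ρ' / (c + ρ x) ^ 2)) x := by
        exact this
      apply h2.congr_of_eventuallyEq
      filter_upwards with y
      rw [hθeq y, div_eq_mul_inv]
    convert hθd using 1
    rw [hρ'def]
    rw [show (-m - 1 : ℝ) = -(m + 1) by ring, Real.rpow_neg (hφpos x).le]
    rw [← hρ x]
    have hφm1 : 0 < (φ x) ^ (m + 1) := Real.rpow_pos_of_pos (hφpos x) _
    have hρx := hρpos x
    have hEx : 0 < Real.exp (-lam * x) := Real.exp_pos _
    field_simp
  have hpos : ∀ x, 0 < 4 * a ^ 2 * m * lam * Real.exp (-lam * x)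
        / (ρ x * (c + ρ x) ^ 2 * (φ x) ^ (m + 1) * (1 + a)) := by
    intro x
    have := hρpos x
    have h2 : 0 < (φ x) ^ (m + 1) := Real.rpow_pos_of_pos (hφpos x) _
    positivity
  refine ⟨key, hpos, ?_⟩
  apply strictMono_of_deriv_pos
  intro x
  rw [(key x).deriv]
  exact hpos x
end

section
/- Let a, m > 0, b ≥ b*(m,a) and c ∈ [2√a, c*(a,b,m)]. Then b − m(1 + c/√(1+a)) ≥ 2√(m(m+1)a/(1+a)). -/
open Real

/-- for `b ≥ b*(m,a)` and `c ∈ [2√a, c*(a,b,m)]`,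
`b − m(1 + c/√(1+a)) ≥ 2√(m(m+1)a/(1+a))`. -/
theorem b_sub_m_bound
    (a b m c : ℝ) (ha : 0 < a) (hb : 0 < b) (hm : 0 < m)
    (hbstar : b ≥ 3 * m * (1 + 2 * Real.sqrt (a / (1 + a)) * (2 + Real.sqrt (1 + 1 / m))))
    (hc1 : 2 * Real.sqrt a ≤ c)
    (hc2 : c ≤ (b - 3 * m) * Real.sqrt (1 + a) / (3 * m)
        - 2 * Real.sqrt a * (1 + Real.sqrt (1 + 1 / m))) :
    b - m * (1 + c / Real.sqrt (1 + a))
      ≥ 2 * Real.sqrt (m * (m + 1) * a / (1 + a)) := by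
  set s := Real.sqrt (1 + a) with hs_def
  set t := Real.sqrt (1 + 1 / m) with ht_def
  have hs : (0:ℝ) < s := Real.sqrt_pos.2 (by linarith)
  have ht : (0:ℝ) ≤ t := Real.sqrt_nonneg _
  have hra : (0:ℝ) ≤ Real.sqrt a := Real.sqrt_nonneg _
  have h3m : (0:ℝ) < 3 * m := by linarith
  have hc2' : (c + 2 * Real.sqrt a * (1 + t)) * (3 * m) ≤ (b - 3 * m) * s := by
    rw [← le_div_iff₀ h3m]; linarith
  have hR : Real.sqrt (m * (m + 1) * a / (1 + a))
      = m * t * (Real.sqrt a / s) := by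
    have h1 : m * (m + 1) * a / (1 + a) = m ^ 2 * (1 + 1 / m) * (a / (1 + a)) := by
      field_simp
    rw [h1, Real.sqrt_mul (by positivity), Real.sqrt_mul (by positivity),
      Real.sqrt_sq hm.le, Real.sqrt_div ha.le, ht_def, hs_def]
  rw [hR, ge_iff_le, ← sub_nonneg]
  have heq : b - m * (1 + c / s) - 2 * (m * t * (Real.sqrt a / s))
      = ((b - m) * s - m * c - 2 * m * t * Real.sqrt a) / s := by
    field_simp; ring
  rw [heq]
  apply div_nonneg _ hs.le
  have h1 : (0:ℝ) ≤ b * s := by positivity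
  have h2 : (0:ℝ) ≤ m * Real.sqrt a := by positivity
  nlinarith [hc2', h1, h2, mul_nonneg (mul_nonneg hm.le ht) hra]
end
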